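/- The class ℒ(RDFAwtl) is not closed under union, intersection with regular sets, alphabetic morphisms, or commutative closure. In particular: L_= = { w ∈ {a,b}* : |w|_a = |w|_b } and L_{2=} = { w ∈ {a,b}* : 2·|w|_a = |w|_b } are each accepted by DFAwtls (hence by RDFAwtls), but L_∨ = L_= ∪ L_{2=} is not accepted by any RDFAwtl; L_= ∩ a*b* = { aⁿbⁿ : n ≥ 0 } is not accepted by any RDFAwtl; the image of an RDFAwtl language under the letter-to-letter morphism a↦a, b↦b, c↦a, d↦b can fail to lie in ℒ(RDFAwtl); and com((ab)* ∪ (abb)*) = L_∨ ∉ ℒ(RDFAwtl). -/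

import Mathlib

/-- A nondeterministic finite automaton with translucent letters (NFAwtl). -/
structure NFAwtl (Q α : Type) where
  τ : Q → Set α
  I : Set Q
  F : Set Q
  δ : Q → α → Set Q
  tr : ∀ q a, a ∈ τ q → δ q a = ∅

namespace NFAwtl

variable {Q α : Type}

/-- One computation step of an NFAwtl: delete the leftmost non-translucent letter
and change state (the head returns to the left end). -/
def Step (A : NFAwtl Q α) : Q × List α → Q × List α → Prop := fun c c' =>
  ∃ u a v, c.2 = u ++ a :: v ∧ (∀ x ∈ u, x ∈ A.τ c.1) ∧ a ∉ A.τ c.1 ∧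
    c'.1 ∈ A.δ c.1 a ∧ c'.2 = u ++ v

/-- Acceptance: from some initial state, reach a configuration whose remaining
letters are all translucent for a final state. -/
def Accepts (A : NFAwtl Q α) (w : List α) : Prop :=
  ∃ q₀ ∈ A.I, ∃ q w', Relation.ReflTransGen A.Step (q₀, w) (q, w') ∧
    (∀ x ∈ w', x ∈ A.τ q) ∧ q ∈ A.F

def lang (A : NFAwtl Q α) : Set (List α) := { w | A.Accepts w }

/-- A DFAwtl: single initial state and at most one transition per state/letter. -/
def Deterministic (A : NFAwtl Q α) : Prop :=
  (∃ q₀, A.I = {q₀}) ∧ ∀ q a, (A.δ q a).Subsingleton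

end NFAwtl

/-- A repetitive NFAwtl (RNFAwtl): on the end-of-tape marker it may accept
(states in `Facc`) or change state via `δend` and continue. -/
structure RNFAwtl (Q α : Type) where
  τ : Q → Set α
  I : Set Q
  δ : Q → α → Set Q
  δend : Q → Set Q
  Facc : Set Q
  tr : ∀ q a, a ∈ τ q → δ q a = ∅
  accEnd : ∀ q, q ∈ Facc → δend q = ∅

namespace RNFAwtl

variable {Q α : Type}

/-- One computation step of an RNFAwtl: either delete the leftmost
non-translucent letter, or, when all remaining letters are translucent,
change state via a `◁`-transition and continue. -/
def Step (A : RNFAwtl Q α) : Q × List α → Q × List α → Prop := fun c c' =>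
  (∃ u a v, c.2 = u ++ a :: v ∧ (∀ x ∈ u, x ∈ A.τ c.1) ∧ a ∉ A.τ c.1 ∧
    c'.1 ∈ A.δ c.1 a ∧ c'.2 = u ++ v)
  ∨ ((∀ x ∈ c.2, x ∈ A.τ c.1) ∧ c'.1 ∈ A.δend c.1 ∧ c'.2 = c.2)

def Accepts (A : RNFAwtl Q α) (w : List α) : Prop :=
  ∃ q₀ ∈ A.I, ∃ q w', Relation.ReflTransGen A.Step (q₀, w) (q, w') ∧
    (∀ x ∈ w', x ∈ A.τ q) ∧ q ∈ A.Facc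

def lang (A : RNFAwtl Q α) : Set (List α) := { w | A.Accepts w }

/-- An RDFAwtl: single initial state and deterministic transitions. -/
def Deterministic (A : RNFAwtl Q α) : Prop :=
  (∃ q₀, A.I = {q₀}) ∧ (∀ q a, (A.δ q a).Subsingleton) ∧ ∀ q, (A.δend q).Subsingleton

end RNFAwtl

/-- A non-returning repetitive NFAwtl (nr-NFAwtl): the head continues from the
position of the last deleted letter; on the end-of-tape marker it may change
state and return the head to the left end. -/
structure NrNFAwtl (Q α : Type) where
  τ : Q → Set α
  I : Set Q
  δ : Q → α → Set Q
  δend : Q → Set Q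
  Facc : Set Q
  tr : ∀ q a, a ∈ τ q → δ q a = ∅
  accEnd : ∀ q, q ∈ Facc → δend q = ∅

namespace NrNFAwtl

variable {Q α : Type}

/-- Configurations are `(x, q, w)`: `x` is the already-skipped prefix, the head
is on the first letter of `w`. -/
def Step (A : NrNFAwtl Q α) :
    List α × Q × List α → List α × Q × List α → Prop := fun c c' =>
  (∃ u a v, c.2.2 = u ++ a :: v ∧ (∀ x ∈ u, x ∈ A.τ c.2.1) ∧ a ∉ A.τ c.2.1 ∧
    c'.2.1 ∈ A.δ c.2.1 a ∧ c'.1 = c.1 ++ u ∧ c'.2.2 = v)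
  ∨ ((∀ x ∈ c.2.2, x ∈ A.τ c.2.1) ∧ c'.2.1 ∈ A.δend c.2.1 ∧ c'.1 = [] ∧
    c'.2.2 = c.1 ++ c.2.2)

def Accepts (A : NrNFAwtl Q α) (w : List α) : Prop :=
  ∃ q₀ ∈ A.I, ∃ x q w', Relation.ReflTransGen A.Step ([], q₀, w) (x, q, w') ∧
    (∀ y ∈ w', y ∈ A.τ q) ∧ q ∈ A.Facc

def lang (A : NrNFAwtl Q α) : Set (List α) := { w | A.Accepts w }

def Deterministic (A : NrNFAwtl Q α) : Prop :=
  (∃ q₀, A.I = {q₀}) ∧ (∀ q a, (A.δ q a).Subsingleton) ∧ ∀ q, (A.δend q).Subsingleton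

end NrNFAwtl

/-- A non-repetitive non-returning NFAwtl (nr-nr-NFAwtl): non-returning, and it
must halt as soon as all remaining letters to the right are translucent. -/
structure NrnrNFAwtl (Q α : Type) where
  τ : Q → Set α
  I : Set Q
  F : Set Q
  δ : Q → α → Set Q
  tr : ∀ q a, a ∈ τ q → δ q a = ∅

namespace NrnrNFAwtl

variable {Q α : Type}

def Step (A : NrnrNFAwtl Q α) :
    List α × Q × List α → List α × Q × List α → Prop := fun c c' =>
  ∃ u a v, c.2.2 = u ++ a :: v ∧ (∀ x ∈ u, x ∈ A.τ c.2.1) ∧ a ∉ A.τ c.2.1 ∧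
    c'.2.1 ∈ A.δ c.2.1 a ∧ c'.1 = c.1 ++ u ∧ c'.2.2 = v

def Accepts (A : NrnrNFAwtl Q α) (w : List α) : Prop :=
  ∃ q₀ ∈ A.I, ∃ x q w', Relation.ReflTransGen A.Step ([], q₀, w) (x, q, w') ∧
    (∀ y ∈ w', y ∈ A.τ q) ∧ q ∈ A.F

def lang (A : NrnrNFAwtl Q α) : Set (List α) := { w | A.Accepts w }

def Deterministic (A : NrnrNFAwtl Q α) : Prop :=
  (∃ q₀, A.I = {q₀}) ∧ ∀ q a, (A.δ q a).Subsingleton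

end NrnrNFAwtl

/-- Language classes. -/
def NFAwtlLangs (α : Type) [Fintype α] : Set (Set (List α)) :=
  { L | ∃ (Q : Type) (_ : Fintype Q) (A : NFAwtl Q α), A.lang = L }

def DFAwtlLangs (α : Type) [Fintype α] : Set (Set (List α)) :=
  { L | ∃ (Q : Type) (_ : Fintype Q) (A : NFAwtl Q α), A.Deterministic ∧ A.lang = L }

def RNFAwtlLangs (α : Type) [Fintype α] : Set (Set (List α)) :=
  { L | ∃ (Q : Type) (_ : Fintype Q) (A : RNFAwtl Q α), A.lang = L }

def RDFAwtlLangs (α : Type) [Fintype α] : Set (Set (List α)) :=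
  { L | ∃ (Q : Type) (_ : Fintype Q) (A : RNFAwtl Q α), A.Deterministic ∧ A.lang = L }

def NrNFAwtlLangs (α : Type) [Fintype α] : Set (Set (List α)) :=
  { L | ∃ (Q : Type) (_ : Fintype Q) (A : NrNFAwtl Q α), A.lang = L }

def NrDFAwtlLangs (α : Type) [Fintype α] : Set (Set (List α)) :=
  { L | ∃ (Q : Type) (_ : Fintype Q) (A : NrNFAwtl Q α), A.Deterministic ∧ A.lang = L }

def NrnrNFAwtlLangs (α : Type) [Fintype α] : Set (Set (List α)) :=
  { L | ∃ (Q : Type) (_ : Fintype Q) (A : NrnrNFAwtl Q α), A.lang = L }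

def NrnrDFAwtlLangs (α : Type) [Fintype α] : Set (Set (List α)) :=
  { L | ∃ (Q : Type) (_ : Fintype Q) (A : NrnrNFAwtl Q α), A.Deterministic ∧ A.lang = L }

/-- The two-letter alphabet {a, b}. -/
inductive AB : Type
  | a | b
deriving DecidableEq

instance : Fintype AB where
  elems := {AB.a, AB.b}
  complete := by intro x; cases x <;> simp

/-- The four-letter alphabet {a, b, c, d}. -/
inductive ABCD : Type
  | a | b | c | d
deriving DecidableEq

instance : Fintype ABCD where
  elems := {ABCD.a, ABCD.b, ABCD.c, ABCD.d}
  complete := by intro x; cases x <;> simp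

/-- The alphabetic morphism a ↦ a, b ↦ b, c ↦ a, d ↦ b. -/
def φ : ABCD → AB
  | ABCD.a => AB.a
  | ABCD.b => AB.b
  | ABCD.c => AB.a
  | ABCD.d => AB.b

def Leq : Set (List AB) := { w | w.count AB.a = w.count AB.b }

def L2eq : Set (List AB) := { w | 2 * w.count AB.a = w.count AB.b }

def Lor : Set (List AB) := Leq ∪ L2eq

/-- The regular language a*b*. -/
def asbs : Set (List AB) :=
  { w | ∃ n m, w = List.replicate n AB.a ++ List.replicate m AB.b }

/-- Commutative closure. -/
def com (L : Set (List AB)) : Set (List AB) :=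
  { w | ∃ u ∈ L, ∀ x : AB, u.count x = w.count x }

/-- The regular language (ab)* ∪ (abb)*. -/
def R : Set (List AB) :=
  { w | ∃ n, w = (List.replicate n [AB.a, AB.b]).flatten } ∪
  { w | ∃ n, w = (List.replicate n [AB.a, AB.b, AB.b]).flatten }

/-- L_= over {a,b} united with L'_{2=} over {c,d}. -/
def M : Set (List ABCD) :=
  { w | (∀ x ∈ w, x = ABCD.a ∨ x = ABCD.b) ∧ w.count ABCD.a = w.count ABCD.b } ∪
  { w | (∀ x ∈ w, x = ABCD.c ∨ x = ABCD.d) ∧ 2 * w.count ABCD.c = w.count ABCD.d }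

section Helpers

open List

lemma AB.cases_all (x : AB) : x = AB.a ∨ x = AB.b := by cases x <;> simp

lemma exists_split_first {γ : Type} (w : List γ) (x : γ) (h : x ∈ w) :
    ∃ u v, w = u ++ x :: v ∧ x ∉ u := by
  induction w with
  | nil => simp at h
  | cons y t ih =>
    by_cases hxy : x = y
    · exact ⟨[], t, by simp [hxy], by simp⟩
    · have hx : x ∈ t := by
        rcases List.mem_cons.mp h with h | h
        · exact absurd h hxy
        · exact h
      obtain ⟨u, v, hw, hnu⟩ := ih hx
      exact ⟨y :: u, v, by simp [hw], by simp [hnu, hxy]⟩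

end Helpers

section PositiveMachines

/-- states for the Leq machine -/
inductive Q3 : Type | z | pa | pb
deriving DecidableEq

instance : Fintype Q3 where
  elems := {Q3.z, Q3.pa, Q3.pb}
  complete := by intro x; cases x <;> simp

def MEq : NFAwtl Q3 AB where
  τ q := match q with | .z => ∅ | .pa => {AB.a} | .pb => {AB.b}
  I := {Q3.z}
  F := {Q3.z}
  δ q x := match q, x with
    | .z, .a => {Q3.pa} | .z, .b => {Q3.pb}
    | .pa, .b => {Q3.z} | .pb, .a => {Q3.z}
    | _, _ => ∅
  tr := by intro q x h; cases q <;> cases x <;> simp_all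

lemma NFAwtl.step_mk {Q α : Type} (A : NFAwtl Q α) {q q' : Q} (u : List α) (x : α) (v : List α)
    (hu : ∀ y ∈ u, y ∈ A.τ q) (hx : x ∉ A.τ q) (hq' : q' ∈ A.δ q x) :
    A.Step (q, u ++ x :: v) (q', u ++ v) := ⟨u, x, v, rfl, hu, hx, hq', rfl⟩

lemma mEq_accepts_aux : ∀ N (w : List AB), w.length ≤ N →
    w.count AB.a = w.count AB.b →
    ∃ qf w', Relation.ReflTransGen MEq.Step (Q3.z, w) (qf, w') ∧
      (∀ x ∈ w', x ∈ MEq.τ qf) ∧ qf ∈ MEq.F := by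
  intro N
  induction N with
  | zero =>
    intro w hl _
    have : w = [] := List.eq_nil_of_length_eq_zero (Nat.le_zero.mp hl)
    subst this
    exact ⟨Q3.z, [], Relation.ReflTransGen.refl, by simp, by simp [MEq]⟩
  | succ N ih =>
    intro w hl hc
    match w with
    | [] => exact ⟨Q3.z, [], Relation.ReflTransGen.refl, by simp, by simp [MEq]⟩
    | AB.a :: t =>
      -- b occurs in t
      have hbt : AB.b ∈ t := by
        have h1 : t.count AB.b = t.count AB.a + 1 := by
          simp [List.count_cons] at hc; omega
        have : 0 < t.count AB.b := by omega
        exact List.count_pos_iff.mp this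
      obtain ⟨u, v, ht, hnu⟩ := exists_split_first t AB.b hbt
      have hu : ∀ y ∈ u, y ∈ MEq.τ Q3.pa := by
        intro y hy
        rcases AB.cases_all y with rfl | rfl
        · simp [MEq]
        · exact absurd hy hnu
      have s1 : MEq.Step (Q3.z, AB.a :: t) (Q3.pa, t) := by
        have := MEq.step_mk (q := Q3.z) (q' := Q3.pa) [] AB.a t (by simp) (by simp [MEq]) (by simp [MEq])
        simpa using this
      have s2 : MEq.Step (Q3.pa, t) (Q3.z, u ++ v) := by
        rw [ht]; exact MEq.step_mk (q := Q3.pa) (q' := Q3.z) u AB.b v hu (by simp [MEq]) (by simp [MEq])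
      have hlen : (u ++ v).length ≤ N := by
        have := congrArg List.length ht
        simp at this ⊢
        simp at hl
        omega
      have hcnt : (u ++ v).count AB.a = (u ++ v).count AB.b := by
        have := congrArg (List.count AB.a) ht
        have := congrArg (List.count AB.b) ht
        simp [List.count_cons, List.count_append] at *
        omega
      obtain ⟨qf, w', rtg, hall, hF⟩ := ih (u ++ v) hlen hcnt
      exact ⟨qf, w', Relation.ReflTransGen.head s1 (Relation.ReflTransGen.head s2 rtg), hall, hF⟩
    | AB.b :: t =>
      have hat : AB.a ∈ t := by
        have h1 : t.count AB.a = t.count AB.b + 1 := by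
          simp [List.count_cons] at hc; omega
        have : 0 < t.count AB.a := by omega
        exact List.count_pos_iff.mp this
      obtain ⟨u, v, ht, hnu⟩ := exists_split_first t AB.a hat
      have hu : ∀ y ∈ u, y ∈ MEq.τ Q3.pb := by
        intro y hy
        rcases AB.cases_all y with rfl | rfl
        · exact absurd hy hnu
        · simp [MEq]
      have s1 : MEq.Step (Q3.z, AB.b :: t) (Q3.pb, t) := by
        have := MEq.step_mk (q := Q3.z) (q' := Q3.pb) [] AB.b t (by simp) (by simp [MEq]) (by simp [MEq])
        simpa using this
      have s2 : MEq.Step (Q3.pb, t) (Q3.z, u ++ v) := by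
        rw [ht]; exact MEq.step_mk (q := Q3.pb) (q' := Q3.z) u AB.a v hu (by simp [MEq]) (by simp [MEq])
      have hlen : (u ++ v).length ≤ N := by
        have := congrArg List.length ht
        simp at this ⊢
        simp at hl
        omega
      have hcnt : (u ++ v).count AB.a = (u ++ v).count AB.b := by
        have := congrArg (List.count AB.a) ht
        have := congrArg (List.count AB.b) ht
        simp [List.count_cons, List.count_append] at *
        omega
      obtain ⟨qf, w', rtg, hall, hF⟩ := ih (u ++ v) hlen hcnt
      exact ⟨qf, w', Relation.ReflTransGen.head s1 (Relation.ReflTransGen.head s2 rtg), hall, hF⟩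

def phiEq : Q3 → List AB → Prop
  | .z, w => w.count AB.a = w.count AB.b
  | .pa, w => w.count AB.b = w.count AB.a + 1
  | .pb, w => w.count AB.a = w.count AB.b + 1

lemma mEq_inv : ∀ c c' : Q3 × List AB, Relation.ReflTransGen MEq.Step c c' →
    (∀ x ∈ c'.2, x ∈ MEq.τ c'.1) → c'.1 ∈ MEq.F → phiEq c.1 c.2 := by
  intro c c' h
  induction h using Relation.ReflTransGen.head_induction_on with
  | refl =>
    intro hall hF
    have hz : c'.1 = Q3.z := by simpa [MEq] using hF
    have : c'.2 = [] := by
      rw [hz] at hall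
      cases h2 : c'.2 with
      | nil => rfl
      | cons y t => exact absurd (hall y (by rw [h2]; simp)) (by simp [MEq])
    rw [hz, this]; simp [phiEq]
  | @head c d hstep _ ih =>
    intro hall hF
    have hmid := ih hall hF
    obtain ⟨u, x, v, he, hu, hx, hδ, he'⟩ := hstep
    obtain ⟨q, w⟩ := c
    obtain ⟨q', w'⟩ := d
    simp only at he he' hu hx hδ hmid ⊢
    subst he; subst he'
    cases q <;> cases x <;>
      simp [MEq] at hδ hu hx <;>
      subst hδ <;>
      [skip; skip; skip; skip] <;>
      simp [phiEq, List.count_append, List.count_cons] at hmid ⊢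
    · -- z, a
      have : u = [] := List.eq_nil_iff_forall_not_mem.mpr (by intro y hy; exact (hu y hy).elim)
      subst this; simp at hmid ⊢; omega
    · have : u = [] := List.eq_nil_iff_forall_not_mem.mpr (by intro y hy; exact (hu y hy).elim)
      subst this; simp at hmid ⊢; omega
    · -- pa, b : u all a's
      have hcb : u.count AB.b = 0 := List.count_eq_zero.mpr (by
        intro hmem; have := hu AB.b hmem; simp at this)
      omega
    · have hca : u.count AB.a = 0 := List.count_eq_zero.mpr (by
        intro hmem; have := hu AB.a hmem; simp at this)
      omega

lemma MEq_lang : MEq.lang = Leq := by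
  ext w
  constructor
  · rintro ⟨q₀, hq₀, q, w', rtg, hall, hF⟩
    have : q₀ = Q3.z := by simpa [MEq] using hq₀
    subst this
    exact mEq_inv (Q3.z, w) (q, w') rtg hall hF
  · intro hw
    obtain ⟨qf, w', rtg, hall, hF⟩ := mEq_accepts_aux w.length w le_rfl hw
    exact ⟨Q3.z, by simp [MEq], qf, w', rtg, hall, hF⟩

lemma MEq_det : MEq.Deterministic := by
  refine ⟨⟨Q3.z, rfl⟩, ?_⟩
  intro q x
  cases q <;> cases x <;> simp [MEq] <;>
    first
      | exact Set.subsingleton_empty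
      | exact Set.subsingleton_singleton

lemma Leq_mem : Leq ∈ DFAwtlLangs AB :=
  ⟨Q3, inferInstance, MEq, MEq_det, MEq_lang⟩

end PositiveMachines
section L2eqMachine

/-- states for the L2eq machine -/
inductive Q4 : Type | z | m2 | m1 | p1
deriving DecidableEq

instance : Fintype Q4 where
  elems := {Q4.z, Q4.m2, Q4.m1, Q4.p1}
  complete := by intro x; cases x <;> simp

def M2Eq : NFAwtl Q4 AB where
  τ q := match q with | .z => ∅ | .m2 => {AB.a} | .m1 => {AB.a} | .p1 => {AB.b}
  I := {Q4.z}
  F := {Q4.z}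
  δ q x := match q, x with
    | .z, .a => {Q4.m2} | .z, .b => {Q4.p1}
    | .m2, .b => {Q4.m1} | .m1, .b => {Q4.z} | .p1, .a => {Q4.m1}
    | _, _ => ∅
  tr := by intro q x h; cases q <;> cases x <;> simp_all

lemma m2Eq_accepts_aux : ∀ N (w : List AB), w.length ≤ N →
    2 * w.count AB.a = w.count AB.b →
    ∃ qf w', Relation.ReflTransGen M2Eq.Step (Q4.z, w) (qf, w') ∧
      (∀ x ∈ w', x ∈ M2Eq.τ qf) ∧ qf ∈ M2Eq.F := by
  intro N
  induction N with
  | zero =>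
    intro w hl _
    have : w = [] := List.eq_nil_of_length_eq_zero (Nat.le_zero.mp hl)
    subst this
    exact ⟨Q4.z, [], Relation.ReflTransGen.refl, by simp, by simp [M2Eq]⟩
  | succ N ih =>
    intro w hl hc
    match w with
    | [] => exact ⟨Q4.z, [], Relation.ReflTransGen.refl, by simp, by simp [M2Eq]⟩
    | AB.a :: t =>
      have hct : 2 * t.count AB.a + 2 = t.count AB.b := by
        simp [List.count_cons] at hc; omega
      have hbt : AB.b ∈ t := List.count_pos_iff.mp (by omega)
      obtain ⟨u, v, ht, hnu⟩ := exists_split_first t AB.b hbt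
      have hu : ∀ y ∈ u, y ∈ M2Eq.τ Q4.m2 := by
        intro y hy
        rcases AB.cases_all y with rfl | rfl
        · simp [M2Eq]
        · exact absurd hy hnu
      have s1 : M2Eq.Step (Q4.z, AB.a :: t) (Q4.m2, t) := by
        have := M2Eq.step_mk (q := Q4.z) (q' := Q4.m2) [] AB.a t (by simp) (by simp [M2Eq])
          (by simp [M2Eq])
        simpa using this
      have s2 : M2Eq.Step (Q4.m2, t) (Q4.m1, u ++ v) := by
        rw [ht]
        exact M2Eq.step_mk (q := Q4.m2) (q' := Q4.m1) u AB.b v hu (by simp [M2Eq]) (by simp [M2Eq])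
      have hcntuv : 2 * (u ++ v).count AB.a + 1 = (u ++ v).count AB.b := by
        have h1 := congrArg (List.count AB.a) ht
        have h2 := congrArg (List.count AB.b) ht
        simp [List.count_cons, List.count_append] at h1 h2
        simp [List.count_append]
        omega
      have hb2 : AB.b ∈ u ++ v := List.count_pos_iff.mp (by omega)
      obtain ⟨u', v', ht', hnu'⟩ := exists_split_first (u ++ v) AB.b hb2
      have hu' : ∀ y ∈ u', y ∈ M2Eq.τ Q4.m1 := by
        intro y hy
        rcases AB.cases_all y with rfl | rfl
        · simp [M2Eq]
        · exact absurd hy hnu'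
      have s3 : M2Eq.Step (Q4.m1, u ++ v) (Q4.z, u' ++ v') := by
        rw [ht']
        exact M2Eq.step_mk (q := Q4.m1) (q' := Q4.z) u' AB.b v' hu' (by simp [M2Eq]) (by simp [M2Eq])
      have hlen : (u' ++ v').length ≤ N := by
        have e1 := congrArg List.length ht
        have e2 := congrArg List.length ht'
        simp at e1 e2 hl ⊢
        omega
      have hcnt' : 2 * (u' ++ v').count AB.a = (u' ++ v').count AB.b := by
        have h1 := congrArg (List.count AB.a) ht'
        have h2 := congrArg (List.count AB.b) ht'
        simp [List.count_cons, List.count_append] at h1 h2 hcntuv ⊢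
        omega
      obtain ⟨qf, w', rtg, hall, hF⟩ := ih (u' ++ v') hlen hcnt'
      exact ⟨qf, w', Relation.ReflTransGen.head s1 (Relation.ReflTransGen.head s2
        (Relation.ReflTransGen.head s3 rtg)), hall, hF⟩
    | AB.b :: t =>
      have hct : 2 * t.count AB.a = t.count AB.b + 1 := by
        simp [List.count_cons] at hc; omega
      have hat : AB.a ∈ t := List.count_pos_iff.mp (by omega)
      obtain ⟨u, v, ht, hnu⟩ := exists_split_first t AB.a hat
      have hu : ∀ y ∈ u, y ∈ M2Eq.τ Q4.p1 := by
        intro y hy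
        rcases AB.cases_all y with rfl | rfl
        · exact absurd hy hnu
        · simp [M2Eq]
      have s1 : M2Eq.Step (Q4.z, AB.b :: t) (Q4.p1, t) := by
        have := M2Eq.step_mk (q := Q4.z) (q' := Q4.p1) [] AB.b t (by simp) (by simp [M2Eq])
          (by simp [M2Eq])
        simpa using this
      have s2 : M2Eq.Step (Q4.p1, t) (Q4.m1, u ++ v) := by
        rw [ht]
        exact M2Eq.step_mk (q := Q4.p1) (q' := Q4.m1) u AB.a v hu (by simp [M2Eq]) (by simp [M2Eq])
      have hcntuv : 2 * (u ++ v).count AB.a + 1 = (u ++ v).count AB.b := by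
        have h1 := congrArg (List.count AB.a) ht
        have h2 := congrArg (List.count AB.b) ht
        simp [List.count_cons, List.count_append] at h1 h2
        simp [List.count_append]
        omega
      have hb2 : AB.b ∈ u ++ v := List.count_pos_iff.mp (by omega)
      obtain ⟨u', v', ht', hnu'⟩ := exists_split_first (u ++ v) AB.b hb2
      have hu' : ∀ y ∈ u', y ∈ M2Eq.τ Q4.m1 := by
        intro y hy
        rcases AB.cases_all y with rfl | rfl
        · simp [M2Eq]
        · exact absurd hy hnu'
      have s3 : M2Eq.Step (Q4.m1, u ++ v) (Q4.z, u' ++ v') := by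
        rw [ht']
        exact M2Eq.step_mk (q := Q4.m1) (q' := Q4.z) u' AB.b v' hu' (by simp [M2Eq]) (by simp [M2Eq])
      have hlen : (u' ++ v').length ≤ N := by
        have e1 := congrArg List.length ht
        have e2 := congrArg List.length ht'
        simp at e1 e2 hl ⊢
        omega
      have hcnt' : 2 * (u' ++ v').count AB.a = (u' ++ v').count AB.b := by
        have h1 := congrArg (List.count AB.a) ht'
        have h2 := congrArg (List.count AB.b) ht'
        simp [List.count_cons, List.count_append] at h1 h2 hcntuv ⊢
        omega
      obtain ⟨qf, w', rtg, hall, hF⟩ := ih (u' ++ v') hlen hcnt'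
      exact ⟨qf, w', Relation.ReflTransGen.head s1 (Relation.ReflTransGen.head s2
        (Relation.ReflTransGen.head s3 rtg)), hall, hF⟩

def phi2Eq : Q4 → List AB → Prop
  | .z, w => 2 * w.count AB.a = w.count AB.b
  | .m2, w => w.count AB.b = 2 * w.count AB.a + 2
  | .m1, w => w.count AB.b = 2 * w.count AB.a + 1
  | .p1, w => 2 * w.count AB.a = w.count AB.b + 1

lemma m2Eq_inv : ∀ c c' : Q4 × List AB, Relation.ReflTransGen M2Eq.Step c c' →
    (∀ x ∈ c'.2, x ∈ M2Eq.τ c'.1) → c'.1 ∈ M2Eq.F → phi2Eq c.1 c.2 := by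
  intro c c' h
  induction h using Relation.ReflTransGen.head_induction_on with
  | refl =>
    intro hall hF
    have hz : c'.1 = Q4.z := by simpa [M2Eq] using hF
    have : c'.2 = [] := by
      rw [hz] at hall
      cases h2 : c'.2 with
      | nil => rfl
      | cons y t => exact absurd (hall y (by rw [h2]; simp)) (by simp [M2Eq])
    rw [hz, this]; simp [phi2Eq]
  | @head c d hstep _ ih =>
    intro hall hF
    have hmid := ih hall hF
    obtain ⟨u, x, v, he, hu, hx, hδ, he'⟩ := hstep
    obtain ⟨q, w⟩ := c
    obtain ⟨q', w'⟩ := d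
    simp only at he he' hu hx hδ hmid ⊢
    subst he; subst he'
    cases q <;> cases x <;>
      simp [M2Eq] at hδ hu hx <;>
      subst hδ <;>
      simp [phi2Eq, List.count_append, List.count_cons] at hmid ⊢
    · have : u = [] := List.eq_nil_iff_forall_not_mem.mpr (by intro y hy; exact (hu y hy).elim)
      subst this; simp at hmid ⊢; omega
    · have : u = [] := List.eq_nil_iff_forall_not_mem.mpr (by intro y hy; exact (hu y hy).elim)
      subst this; simp at hmid ⊢; omega
    · have hcb : u.count AB.b = 0 := List.count_eq_zero.mpr (by
        intro hmem; have := hu AB.b hmem; simp at this)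
      omega
    · have hcb : u.count AB.b = 0 := List.count_eq_zero.mpr (by
        intro hmem; have := hu AB.b hmem; simp at this)
      omega
    · have hca : u.count AB.a = 0 := List.count_eq_zero.mpr (by
        intro hmem; have := hu AB.a hmem; simp at this)
      omega

lemma M2Eq_lang : M2Eq.lang = L2eq := by
  ext w
  constructor
  · rintro ⟨q₀, hq₀, q, w', rtg, hall, hF⟩
    have : q₀ = Q4.z := by simpa [M2Eq] using hq₀
    subst this
    exact m2Eq_inv (Q4.z, w) (q, w') rtg hall hF
  · intro hw
    obtain ⟨qf, w', rtg, hall, hF⟩ := m2Eq_accepts_aux w.length w le_rfl hw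
    exact ⟨Q4.z, by simp [M2Eq], qf, w', rtg, hall, hF⟩

lemma M2Eq_det : M2Eq.Deterministic := by
  refine ⟨⟨Q4.z, rfl⟩, ?_⟩
  intro q x
  cases q <;> cases x <;>
    first
      | exact Set.subsingleton_empty
      | exact Set.subsingleton_singleton

lemma L2eq_mem : L2eq ∈ DFAwtlLangs AB :=
  ⟨Q4, inferInstance, M2Eq, M2Eq_det, M2Eq_lang⟩

end L2eqMachine
section MMachine

lemma ABCD.cases_all (x : ABCD) : x = ABCD.a ∨ x = ABCD.b ∨ x = ABCD.c ∨ x = ABCD.d := by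
  cases x <;> simp

/-- states for the M machine -/
inductive Q8 : Type | z | zab | pa | pb | zcd | m2 | m1 | p1
deriving DecidableEq

instance : Fintype Q8 where
  elems := {Q8.z, Q8.zab, Q8.pa, Q8.pb, Q8.zcd, Q8.m2, Q8.m1, Q8.p1}
  complete := by intro x; cases x <;> simp

def MM : NFAwtl Q8 ABCD where
  τ q := match q with
    | .z => ∅ | .zab => ∅ | .pa => {ABCD.a} | .pb => {ABCD.b}
    | .zcd => ∅ | .m2 => {ABCD.c} | .m1 => {ABCD.c} | .p1 => {ABCD.d}
  I := {Q8.z}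
  F := {Q8.z, Q8.zab, Q8.zcd}
  δ q x := match q, x with
    | .z, .a => {Q8.pa} | .z, .b => {Q8.pb} | .z, .c => {Q8.m2} | .z, .d => {Q8.p1}
    | .zab, .a => {Q8.pa} | .zab, .b => {Q8.pb}
    | .pa, .b => {Q8.zab} | .pb, .a => {Q8.zab}
    | .zcd, .c => {Q8.m2} | .zcd, .d => {Q8.p1}
    | .m2, .d => {Q8.m1} | .m1, .d => {Q8.zcd} | .p1, .c => {Q8.m1}
    | _, _ => ∅
  tr := by intro q x h; cases q <;> cases x <;> simp_all

lemma mm_accepts_ab : ∀ N (w : List ABCD), w.length ≤ N →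
    (∀ x ∈ w, x = ABCD.a ∨ x = ABCD.b) → w.count ABCD.a = w.count ABCD.b →
    ∀ q, (q = Q8.z ∨ q = Q8.zab) →
    ∃ qf w', Relation.ReflTransGen MM.Step (q, w) (qf, w') ∧
      (∀ x ∈ w', x ∈ MM.τ qf) ∧ qf ∈ MM.F := by
  intro N
  induction N with
  | zero =>
    intro w hl _ _ q hq
    have : w = [] := List.eq_nil_of_length_eq_zero (Nat.le_zero.mp hl)
    subst this
    rcases hq with rfl | rfl <;>
      exact ⟨_, [], Relation.ReflTransGen.refl, by simp, by simp [MM]⟩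
  | succ N ih =>
    intro w hl hab hc q hq
    match w with
    | [] =>
      rcases hq with rfl | rfl <;>
        exact ⟨_, [], Relation.ReflTransGen.refl, by simp, by simp [MM]⟩
    | x :: t =>
      have hτq : MM.τ q = ∅ := by rcases hq with rfl | rfl <;> rfl
      rcases hab x (by simp) with rfl | rfl
      · -- head a
        have hbt : ABCD.b ∈ t := by
          have : 0 < t.count ABCD.b := by simp [List.count_cons] at hc; omega
          exact List.count_pos_iff.mp this
        obtain ⟨u, v, ht, hnu⟩ := exists_split_first t ABCD.b hbt
        have hu : ∀ y ∈ u, y ∈ MM.τ Q8.pa := by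
          intro y hy
          rcases hab y (by simp [ht]; tauto) with rfl | rfl
          · simp [MM]
          · exact absurd hy hnu
        have s1 : MM.Step (q, ABCD.a :: t) (Q8.pa, t) := by
          have := MM.step_mk (q := q) (q' := Q8.pa) [] ABCD.a t (by simp)
            (by simp [hτq]) (by rcases hq with rfl | rfl <;> simp [MM])
          simpa using this
        have s2 : MM.Step (Q8.pa, t) (Q8.zab, u ++ v) := by
          rw [ht]
          exact MM.step_mk (q := Q8.pa) (q' := Q8.zab) u ABCD.b v hu (by simp [MM]) (by simp [MM])
        have hlen : (u ++ v).length ≤ N := by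
          have := congrArg List.length ht
          simp at this hl ⊢; omega
        have hab' : ∀ y ∈ u ++ v, y = ABCD.a ∨ y = ABCD.b := by
          intro y hy
          apply hab; simp [ht]
          rcases List.mem_append.mp hy with h | h
          · tauto
          · tauto
        have hcnt : (u ++ v).count ABCD.a = (u ++ v).count ABCD.b := by
          have h1 := congrArg (List.count ABCD.a) ht
          have h2 := congrArg (List.count ABCD.b) ht
          simp [List.count_cons, List.count_append] at h1 h2 hc ⊢
          omega
        obtain ⟨qf, w', rtg, hall, hF⟩ := ih (u ++ v) hlen hab' hcnt Q8.zab (Or.inr rfl)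
        exact ⟨qf, w', Relation.ReflTransGen.head s1 (Relation.ReflTransGen.head s2 rtg), hall, hF⟩
      · -- head b
        have hat : ABCD.a ∈ t := by
          have : 0 < t.count ABCD.a := by simp [List.count_cons] at hc; omega
          exact List.count_pos_iff.mp this
        obtain ⟨u, v, ht, hnu⟩ := exists_split_first t ABCD.a hat
        have hu : ∀ y ∈ u, y ∈ MM.τ Q8.pb := by
          intro y hy
          rcases hab y (by simp [ht]; tauto) with rfl | rfl
          · exact absurd hy hnu
          · simp [MM]
        have s1 : MM.Step (q, ABCD.b :: t) (Q8.pb, t) := by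
          have := MM.step_mk (q := q) (q' := Q8.pb) [] ABCD.b t (by simp)
            (by simp [hτq]) (by rcases hq with rfl | rfl <;> simp [MM])
          simpa using this
        have s2 : MM.Step (Q8.pb, t) (Q8.zab, u ++ v) := by
          rw [ht]
          exact MM.step_mk (q := Q8.pb) (q' := Q8.zab) u ABCD.a v hu (by simp [MM]) (by simp [MM])
        have hlen : (u ++ v).length ≤ N := by
          have := congrArg List.length ht
          simp at this hl ⊢; omega
        have hab' : ∀ y ∈ u ++ v, y = ABCD.a ∨ y = ABCD.b := by
          intro y hy
          apply hab; simp [ht]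
          rcases List.mem_append.mp hy with h | h
          · tauto
          · tauto
        have hcnt : (u ++ v).count ABCD.a = (u ++ v).count ABCD.b := by
          have h1 := congrArg (List.count ABCD.a) ht
          have h2 := congrArg (List.count ABCD.b) ht
          simp [List.count_cons, List.count_append] at h1 h2 hc ⊢
          omega
        obtain ⟨qf, w', rtg, hall, hF⟩ := ih (u ++ v) hlen hab' hcnt Q8.zab (Or.inr rfl)
        exact ⟨qf, w', Relation.ReflTransGen.head s1 (Relation.ReflTransGen.head s2 rtg), hall, hF⟩
lemma mm_accepts_cd : ∀ N (w : List ABCD), w.length ≤ N →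
    (∀ x ∈ w, x = ABCD.c ∨ x = ABCD.d) → 2 * w.count ABCD.c = w.count ABCD.d →
    ∀ q, (q = Q8.z ∨ q = Q8.zcd) →
    ∃ qf w', Relation.ReflTransGen MM.Step (q, w) (qf, w') ∧
      (∀ x ∈ w', x ∈ MM.τ qf) ∧ qf ∈ MM.F := by
  intro N
  induction N with
  | zero =>
    intro w hl _ _ q hq
    have : w = [] := List.eq_nil_of_length_eq_zero (Nat.le_zero.mp hl)
    subst this
    rcases hq with rfl | rfl <;>
      exact ⟨_, [], Relation.ReflTransGen.refl, by simp, by simp [MM]⟩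
  | succ N ih =>
    intro w hl hcd hc q hq
    match w with
    | [] =>
      rcases hq with rfl | rfl <;>
        exact ⟨_, [], Relation.ReflTransGen.refl, by simp, by simp [MM]⟩
    | x :: t =>
      have hτq : MM.τ q = ∅ := by rcases hq with rfl | rfl <;> rfl
      have hcd_t : ∀ y ∈ t, y = ABCD.c ∨ y = ABCD.d := fun y hy => hcd y (by simp [hy])
      rcases hcd x (by simp) with rfl | rfl
      · -- head c : consume c, then two d's
        have hdt : ABCD.d ∈ t := by
          have : 0 < t.count ABCD.d := by simp [List.count_cons] at hc; omega
          exact List.count_pos_iff.mp this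
        obtain ⟨u, v, ht, hnu⟩ := exists_split_first t ABCD.d hdt
        have hu : ∀ y ∈ u, y ∈ MM.τ Q8.m2 := by
          intro y hy
          rcases hcd_t y (by simp [ht]; tauto) with rfl | rfl
          · simp [MM]
          · exact absurd hy hnu
        have s1 : MM.Step (q, ABCD.c :: t) (Q8.m2, t) := by
          have := MM.step_mk (q := q) (q' := Q8.m2) [] ABCD.c t (by simp)
            (by simp [hτq]) (by rcases hq with rfl | rfl <;> simp [MM])
          simpa using this
        have s2 : MM.Step (Q8.m2, t) (Q8.m1, u ++ v) := by
          rw [ht]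
          exact MM.step_mk (q := Q8.m2) (q' := Q8.m1) u ABCD.d v hu (by simp [MM]) (by simp [MM])
        have hcd1 : ∀ y ∈ u ++ v, y = ABCD.c ∨ y = ABCD.d := by
          intro y hy
          apply hcd_t; simp [ht]
          rcases List.mem_append.mp hy with h | h <;> tauto
        have hcnt1 : (u ++ v).count ABCD.d = 2 * (u ++ v).count ABCD.c + 1 := by
          have h1 := congrArg (List.count ABCD.c) ht
          have h2 := congrArg (List.count ABCD.d) ht
          simp [List.count_cons, List.count_append] at h1 h2 hc ⊢
          omega
        have hd2 : ABCD.d ∈ u ++ v := List.count_pos_iff.mp (by omega)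
        obtain ⟨u', v', ht', hnu'⟩ := exists_split_first (u ++ v) ABCD.d hd2
        have hu' : ∀ y ∈ u', y ∈ MM.τ Q8.m1 := by
          intro y hy
          rcases hcd1 y (by simp [ht']; tauto) with rfl | rfl
          · simp [MM]
          · exact absurd hy hnu'
        have s3 : MM.Step (Q8.m1, u ++ v) (Q8.zcd, u' ++ v') := by
          rw [ht']
          exact MM.step_mk (q := Q8.m1) (q' := Q8.zcd) u' ABCD.d v' hu' (by simp [MM]) (by simp [MM])
        have hlen : (u' ++ v').length ≤ N := by
          have e1 := congrArg List.length ht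
          have e2 := congrArg List.length ht'
          simp at e1 e2 hl ⊢; omega
        have hcd2 : ∀ y ∈ u' ++ v', y = ABCD.c ∨ y = ABCD.d := by
          intro y hy
          apply hcd1; simp [ht']
          rcases List.mem_append.mp hy with h | h <;> tauto
        have hcnt2 : 2 * (u' ++ v').count ABCD.c = (u' ++ v').count ABCD.d := by
          have h1 := congrArg (List.count ABCD.c) ht'
          have h2 := congrArg (List.count ABCD.d) ht'
          simp [List.count_cons, List.count_append] at h1 h2 hcnt1 ⊢
          omega
        obtain ⟨qf, w', rtg, hall, hF⟩ := ih (u' ++ v') hlen hcd2 hcnt2 Q8.zcd (Or.inr rfl)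
        exact ⟨qf, w', Relation.ReflTransGen.head s1 (Relation.ReflTransGen.head s2
          (Relation.ReflTransGen.head s3 rtg)), hall, hF⟩
      · -- head d : consume d, then a c, then a d
        have hct : ABCD.c ∈ t := by
          have : 0 < t.count ABCD.c := by simp [List.count_cons] at hc; omega
          exact List.count_pos_iff.mp this
        obtain ⟨u, v, ht, hnu⟩ := exists_split_first t ABCD.c hct
        have hu : ∀ y ∈ u, y ∈ MM.τ Q8.p1 := by
          intro y hy
          rcases hcd_t y (by simp [ht]; tauto) with rfl | rfl
          · exact absurd hy hnu
          · simp [MM]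
        have s1 : MM.Step (q, ABCD.d :: t) (Q8.p1, t) := by
          have := MM.step_mk (q := q) (q' := Q8.p1) [] ABCD.d t (by simp)
            (by simp [hτq]) (by rcases hq with rfl | rfl <;> simp [MM])
          simpa using this
        have s2 : MM.Step (Q8.p1, t) (Q8.m1, u ++ v) := by
          rw [ht]
          exact MM.step_mk (q := Q8.p1) (q' := Q8.m1) u ABCD.c v hu (by simp [MM]) (by simp [MM])
        have hcd1 : ∀ y ∈ u ++ v, y = ABCD.c ∨ y = ABCD.d := by
          intro y hy
          apply hcd_t; simp [ht]
          rcases List.mem_append.mp hy with h | h <;> tauto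
        have hcnt1 : (u ++ v).count ABCD.d = 2 * (u ++ v).count ABCD.c + 1 := by
          have h1 := congrArg (List.count ABCD.c) ht
          have h2 := congrArg (List.count ABCD.d) ht
          simp [List.count_cons, List.count_append] at h1 h2 hc ⊢
          omega
        have hd2 : ABCD.d ∈ u ++ v := List.count_pos_iff.mp (by omega)
        obtain ⟨u', v', ht', hnu'⟩ := exists_split_first (u ++ v) ABCD.d hd2
        have hu' : ∀ y ∈ u', y ∈ MM.τ Q8.m1 := by
          intro y hy
          rcases hcd1 y (by simp [ht']; tauto) with rfl | rfl
          · simp [MM]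
          · exact absurd hy hnu'
        have s3 : MM.Step (Q8.m1, u ++ v) (Q8.zcd, u' ++ v') := by
          rw [ht']
          exact MM.step_mk (q := Q8.m1) (q' := Q8.zcd) u' ABCD.d v' hu' (by simp [MM]) (by simp [MM])
        have hlen : (u' ++ v').length ≤ N := by
          have e1 := congrArg List.length ht
          have e2 := congrArg List.length ht'
          simp at e1 e2 hl ⊢; omega
        have hcd2 : ∀ y ∈ u' ++ v', y = ABCD.c ∨ y = ABCD.d := by
          intro y hy
          apply hcd1; simp [ht']
          rcases List.mem_append.mp hy with h | h <;> tauto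
        have hcnt2 : 2 * (u' ++ v').count ABCD.c = (u' ++ v').count ABCD.d := by
          have h1 := congrArg (List.count ABCD.c) ht'
          have h2 := congrArg (List.count ABCD.d) ht'
          simp [List.count_cons, List.count_append] at h1 h2 hcnt1 ⊢
          omega
        obtain ⟨qf, w', rtg, hall, hF⟩ := ih (u' ++ v') hlen hcd2 hcnt2 Q8.zcd (Or.inr rfl)
        exact ⟨qf, w', Relation.ReflTransGen.head s1 (Relation.ReflTransGen.head s2
          (Relation.ReflTransGen.head s3 rtg)), hall, hF⟩
def phiM : Q8 → List ABCD → Prop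
  | .z, w => w ∈ M
  | .zab, w => (∀ x ∈ w, x = ABCD.a ∨ x = ABCD.b) ∧ w.count ABCD.a = w.count ABCD.b
  | .pa, w => (∀ x ∈ w, x = ABCD.a ∨ x = ABCD.b) ∧ w.count ABCD.b = w.count ABCD.a + 1
  | .pb, w => (∀ x ∈ w, x = ABCD.a ∨ x = ABCD.b) ∧ w.count ABCD.a = w.count ABCD.b + 1
  | .zcd, w => (∀ x ∈ w, x = ABCD.c ∨ x = ABCD.d) ∧ 2 * w.count ABCD.c = w.count ABCD.d
  | .m2, w => (∀ x ∈ w, x = ABCD.c ∨ x = ABCD.d) ∧ w.count ABCD.d = 2 * w.count ABCD.c + 2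
  | .m1, w => (∀ x ∈ w, x = ABCD.c ∨ x = ABCD.d) ∧ w.count ABCD.d = 2 * w.count ABCD.c + 1
  | .p1, w => (∀ x ∈ w, x = ABCD.c ∨ x = ABCD.d) ∧ 2 * w.count ABCD.c = w.count ABCD.d + 1

lemma mm_inv : ∀ c c' : Q8 × List ABCD, Relation.ReflTransGen MM.Step c c' →
    (∀ x ∈ c'.2, x ∈ MM.τ c'.1) → c'.1 ∈ MM.F → phiM c.1 c.2 := by
  intro c c' h
  induction h using Relation.ReflTransGen.head_induction_on with
  | refl =>
    intro hall hF
    have hz : c'.1 = Q8.z ∨ c'.1 = Q8.zab ∨ c'.1 = Q8.zcd := by simpa [MM] using hF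
    have hτ : MM.τ c'.1 = ∅ := by rcases hz with h1 | h1 | h1 <;> rw [h1] <;> rfl
    have hnil : c'.2 = [] := by
      rw [hτ] at hall
      cases h2 : c'.2 with
      | nil => rfl
      | cons y t => exact absurd (hall y (by rw [h2]; simp)) (by simp)
    rcases hz with h1 | h1 | h1 <;> rw [h1, hnil] <;> simp [phiM] <;>
      exact Or.inl (by simp)
  | @head c d hstep _ ih =>
    intro hall hF
    have hmid := ih hall hF
    obtain ⟨u, x, v, he, hu, hx, hδ, he'⟩ := hstep
    obtain ⟨q, w⟩ := c
    obtain ⟨q', w'⟩ := d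
    simp only at he he' hu hx hδ hmid ⊢
    subst he; subst he'
    cases q <;> cases x <;> simp [MM] at hδ hu hx <;> subst hδ
    -- z,a
    · have hu0 : u = [] := List.eq_nil_iff_forall_not_mem.mpr (by intro y hy; exact (hu y hy).elim)
      subst hu0
      obtain ⟨hml, hmc⟩ := hmid
      simp only [phiM, M]
      left
      constructor
      · intro y hy
        simp at hy
        rcases hy with rfl | hy
        · tauto
        · exact hml y (by simpa using hy)
      · simp [List.count_cons]
        simp at hmc
        omega
    -- z,b
    · have hu0 : u = [] := List.eq_nil_iff_forall_not_mem.mpr (by intro y hy; exact (hu y hy).elim)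
      subst hu0
      obtain ⟨hml, hmc⟩ := hmid
      simp only [phiM, M]
      left
      constructor
      · intro y hy
        simp at hy
        rcases hy with rfl | hy
        · tauto
        · exact hml y (by simpa using hy)
      · simp [List.count_cons]
        simp at hmc
        omega
    -- z,c
    · have hu0 : u = [] := List.eq_nil_iff_forall_not_mem.mpr (by intro y hy; exact (hu y hy).elim)
      subst hu0
      obtain ⟨hml, hmc⟩ := hmid
      simp only [phiM, M]
      right
      constructor
      · intro y hy
        simp at hy
        rcases hy with rfl | hy
        · tauto
        · exact hml y (by simpa using hy)
      · simp [List.count_cons]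
        simp at hmc
        omega
    -- z,d
    · have hu0 : u = [] := List.eq_nil_iff_forall_not_mem.mpr (by intro y hy; exact (hu y hy).elim)
      subst hu0
      obtain ⟨hml, hmc⟩ := hmid
      simp only [phiM, M]
      right
      constructor
      · intro y hy
        simp at hy
        rcases hy with rfl | hy
        · tauto
        · exact hml y (by simpa using hy)
      · simp [List.count_cons]
        simp at hmc
        omega
    -- zab,a
    · have hu0 : u = [] := List.eq_nil_iff_forall_not_mem.mpr (by intro y hy; exact (hu y hy).elim)
      subst hu0
      obtain ⟨hml, hmc⟩ := hmid
      refine ⟨?_, ?_⟩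
      · intro y hy
        simp at hy
        rcases hy with rfl | hy
        · tauto
        · exact hml y (by simpa using hy)
      · simp [List.count_cons] at hmc ⊢
        omega
    -- zab,b
    · have hu0 : u = [] := List.eq_nil_iff_forall_not_mem.mpr (by intro y hy; exact (hu y hy).elim)
      subst hu0
      obtain ⟨hml, hmc⟩ := hmid
      refine ⟨?_, ?_⟩
      · intro y hy
        simp at hy
        rcases hy with rfl | hy
        · tauto
        · exact hml y (by simpa using hy)
      · simp [List.count_cons] at hmc ⊢
        omega
    -- pa,b : u all a
    · obtain ⟨hml, hmc⟩ := hmid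
      have hua : ∀ y ∈ u, y = ABCD.a := fun y hy => hu y hy
      refine ⟨?_, ?_⟩
      · intro y hy
        simp at hy
        rcases hy with hy | rfl | hy
        · exact Or.inl (hua y hy)
        · tauto
        · exact hml y (by simp [hy])
      · have hub : u.count ABCD.b = 0 := List.count_eq_zero.mpr
          (fun hm => by have := hua _ hm; simp at this)
        simp [List.count_cons, List.count_append] at hmc ⊢
        omega
    -- pb,a : u all b
    · obtain ⟨hml, hmc⟩ := hmid
      have hua : ∀ y ∈ u, y = ABCD.b := fun y hy => hu y hy
      refine ⟨?_, ?_⟩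
      · intro y hy
        simp at hy
        rcases hy with hy | rfl | hy
        · exact Or.inr (hua y hy)
        · tauto
        · exact hml y (by simp [hy])
      · have hub : u.count ABCD.a = 0 := List.count_eq_zero.mpr
          (fun hm => by have := hua _ hm; simp at this)
        simp [List.count_cons, List.count_append] at hmc ⊢
        omega
    -- zcd,c
    · have hu0 : u = [] := List.eq_nil_iff_forall_not_mem.mpr (by intro y hy; exact (hu y hy).elim)
      subst hu0
      obtain ⟨hml, hmc⟩ := hmid
      refine ⟨?_, ?_⟩
      · intro y hy
        simp at hy
        rcases hy with rfl | hy
        · tauto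
        · exact hml y (by simpa using hy)
      · simp [List.count_cons] at hmc ⊢
        omega
    -- zcd,d
    · have hu0 : u = [] := List.eq_nil_iff_forall_not_mem.mpr (by intro y hy; exact (hu y hy).elim)
      subst hu0
      obtain ⟨hml, hmc⟩ := hmid
      refine ⟨?_, ?_⟩
      · intro y hy
        simp at hy
        rcases hy with rfl | hy
        · tauto
        · exact hml y (by simpa using hy)
      · simp [List.count_cons] at hmc ⊢
        omega
    -- m2,d : u all c
    · obtain ⟨hml, hmc⟩ := hmid
      have hua : ∀ y ∈ u, y = ABCD.c := fun y hy => hu y hy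
      refine ⟨?_, ?_⟩
      · intro y hy
        simp at hy
        rcases hy with hy | rfl | hy
        · exact Or.inl (hua y hy)
        · tauto
        · exact hml y (by simp [hy])
      · have hub : u.count ABCD.d = 0 := List.count_eq_zero.mpr
          (fun hm => by have := hua _ hm; simp at this)
        simp [List.count_cons, List.count_append] at hmc ⊢
        omega
    -- m1,d : u all c
    · obtain ⟨hml, hmc⟩ := hmid
      have hua : ∀ y ∈ u, y = ABCD.c := fun y hy => hu y hy
      refine ⟨?_, ?_⟩
      · intro y hy
        simp at hy
        rcases hy with hy | rfl | hy
        · exact Or.inl (hua y hy)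
        · tauto
        · exact hml y (by simp [hy])
      · have hub : u.count ABCD.d = 0 := List.count_eq_zero.mpr
          (fun hm => by have := hua _ hm; simp at this)
        simp [List.count_cons, List.count_append] at hmc ⊢
        omega
    -- p1,c : u all d
    · obtain ⟨hml, hmc⟩ := hmid
      have hua : ∀ y ∈ u, y = ABCD.d := fun y hy => hu y hy
      refine ⟨?_, ?_⟩
      · intro y hy
        simp at hy
        rcases hy with hy | rfl | hy
        · exact Or.inr (hua y hy)
        · tauto
        · exact hml y (by simp [hy])
      · have hub : u.count ABCD.c = 0 := List.count_eq_zero.mpr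
          (fun hm => by have := hua _ hm; simp at this)
        simp [List.count_cons, List.count_append] at hmc ⊢
        omega

lemma MM_lang : MM.lang = M := by
  ext w
  constructor
  · rintro ⟨q₀, hq₀, q, w', rtg, hall, hF⟩
    have : q₀ = Q8.z := by simpa [MM] using hq₀
    subst this
    exact mm_inv (Q8.z, w) (q, w') rtg hall hF
  · intro hw
    rcases hw with ⟨hml, hmc⟩ | ⟨hml, hmc⟩
    · obtain ⟨qf, w', rtg, hall, hF⟩ :=
        mm_accepts_ab w.length w le_rfl hml hmc Q8.z (Or.inl rfl)
      exact ⟨Q8.z, by simp [MM], qf, w', rtg, hall, hF⟩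
    · obtain ⟨qf, w', rtg, hall, hF⟩ :=
        mm_accepts_cd w.length w le_rfl hml hmc Q8.z (Or.inl rfl)
      exact ⟨Q8.z, by simp [MM], qf, w', rtg, hall, hF⟩

lemma MM_det : MM.Deterministic := by
  refine ⟨⟨Q8.z, rfl⟩, ?_⟩
  intro q x
  cases q <;> cases x <;>
    first
      | exact Set.subsingleton_empty
      | exact Set.subsingleton_singleton

lemma M_mem : M ∈ DFAwtlLangs ABCD :=
  ⟨Q8, inferInstance, MM, MM_det, MM_lang⟩

end MMachine
section SetEqualities

lemma count_map_phi_a (w : List ABCD) :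
    (w.map φ).count AB.a = w.count ABCD.a + w.count ABCD.c := by
  induction w with
  | nil => simp
  | cons x t ih => cases x <;> simp [φ, List.count_cons, ih] <;> omega

lemma count_map_phi_b (w : List ABCD) :
    (w.map φ).count AB.b = w.count ABCD.b + w.count ABCD.d := by
  induction w with
  | nil => simp
  | cons x t ih => cases x <;> simp [φ, List.count_cons, ih] <;> omega

def ψ1 : AB → ABCD | AB.a => ABCD.a | AB.b => ABCD.b
def ψ2 : AB → ABCD | AB.a => ABCD.c | AB.b => ABCD.d

lemma map_phi_psi1 (w : List AB) : (w.map ψ1).map φ = w := by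
  induction w with
  | nil => rfl
  | cons x t ih => cases x <;> simp [ψ1, φ, ih]

lemma map_phi_psi2 (w : List AB) : (w.map ψ2).map φ = w := by
  induction w with
  | nil => rfl
  | cons x t ih => cases x <;> simp [ψ2, φ, ih]

lemma counts_psi1 (w : List AB) :
    (w.map ψ1).count ABCD.a = w.count AB.a ∧ (w.map ψ1).count ABCD.b = w.count AB.b ∧
    (∀ x ∈ w.map ψ1, x = ABCD.a ∨ x = ABCD.b) := by
  induction w with
  | nil => simp
  | cons x t ih =>
    obtain ⟨h1, h2, h3⟩ := ih
    cases x <;>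
      refine ⟨by simp [ψ1, List.count_cons, h1], by simp [ψ1, List.count_cons, h2], ?_⟩ <;>
      · intro y hy
        simp [ψ1] at hy
        rcases hy with rfl | hy
        · tauto
        · exact h3 y (by simpa [ψ1] using hy)

lemma counts_psi2 (w : List AB) :
    (w.map ψ2).count ABCD.c = w.count AB.a ∧ (w.map ψ2).count ABCD.d = w.count AB.b ∧
    (∀ x ∈ w.map ψ2, x = ABCD.c ∨ x = ABCD.d) := by
  induction w with
  | nil => simp
  | cons x t ih =>
    obtain ⟨h1, h2, h3⟩ := ih
    cases x <;>
      refine ⟨by simp [ψ2, List.count_cons, h1], by simp [ψ2, List.count_cons, h2], ?_⟩ <;>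
      · intro y hy
        simp [ψ2] at hy
        rcases hy with rfl | hy
        · tauto
        · exact h3 y (by simpa [ψ2] using hy)

lemma image_phi_M : (List.map φ) '' M = Lor := by
  ext w
  constructor
  · rintro ⟨u, hu, rfl⟩
    rcases hu with ⟨hml, hmc⟩ | ⟨hml, hmc⟩
    · left
      have hc : u.count ABCD.c = 0 := List.count_eq_zero.mpr (by
        intro hm; rcases hml _ hm with h | h <;> simp at h)
      have hd : u.count ABCD.d = 0 := List.count_eq_zero.mpr (by
        intro hm; rcases hml _ hm with h | h <;> simp at h)
      show (u.map φ).count AB.a = (u.map φ).count AB.b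
      rw [count_map_phi_a, count_map_phi_b]
      omega
    · right
      have ha : u.count ABCD.a = 0 := List.count_eq_zero.mpr (by
        intro hm; rcases hml _ hm with h | h <;> simp at h)
      have hb : u.count ABCD.b = 0 := List.count_eq_zero.mpr (by
        intro hm; rcases hml _ hm with h | h <;> simp at h)
      show 2 * (u.map φ).count AB.a = (u.map φ).count AB.b
      rw [count_map_phi_a, count_map_phi_b]
      omega
  · intro hw
    rcases hw with hw | hw
    · obtain ⟨h1, h2, h3⟩ := counts_psi1 w
      exact ⟨w.map ψ1, Or.inl ⟨h3, by rw [h1, h2]; exact hw⟩, map_phi_psi1 w⟩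
    · obtain ⟨h1, h2, h3⟩ := counts_psi2 w
      exact ⟨w.map ψ2, Or.inr ⟨h3, by rw [h1, h2]; exact hw⟩, map_phi_psi2 w⟩

lemma count_flatten_replicate (n : ℕ) (l : List AB) (x : AB) :
    ((List.replicate n l).flatten).count x = n * l.count x := by
  induction n with
  | zero => simp
  | succ k ih =>
    rw [List.replicate_succ, List.flatten_cons, List.count_append, ih]
    ring

lemma com_R_eq : com R = Lor := by
  ext w
  constructor
  · rintro ⟨u, hu, hcnt⟩
    rcases hu with ⟨n, rfl⟩ | ⟨n, rfl⟩
    · left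
      show w.count AB.a = w.count AB.b
      have ha := hcnt AB.a
      have hb := hcnt AB.b
      rw [count_flatten_replicate] at ha hb
      simp [List.count_cons] at ha hb
      omega
    · right
      show 2 * w.count AB.a = w.count AB.b
      have ha := hcnt AB.a
      have hb := hcnt AB.b
      rw [count_flatten_replicate] at ha hb
      simp [List.count_cons] at ha hb
      omega
  · intro hw
    rcases hw with hw | hw
    · have hw' : w.count AB.a = w.count AB.b := hw
      refine ⟨(List.replicate (w.count AB.a) [AB.a, AB.b]).flatten, Or.inl ⟨_, rfl⟩, ?_⟩
      intro x
      rw [count_flatten_replicate]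
      cases x <;> simp [List.count_cons] <;> omega
    · have hw' : 2 * w.count AB.a = w.count AB.b := hw
      refine ⟨(List.replicate (w.count AB.a) [AB.a, AB.b, AB.b]).flatten, Or.inr ⟨_, rfl⟩, ?_⟩
      intro x
      rw [count_flatten_replicate]
      cases x <;> simp [List.count_cons] <;> omega

end SetEqualities
section Impossibility

open List

/-- words of shape a^n b^m -/
def wrd (n m : ℕ) : List AB := List.replicate n AB.a ++ List.replicate m AB.b

lemma wrd_succ_a (i j : ℕ) : wrd (i + 1) j = AB.a :: wrd i j := by
  simp [wrd, List.replicate_succ]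

lemma wrd_succ_b (i j : ℕ) :
    wrd i (j + 1) = List.replicate i AB.a ++ AB.b :: List.replicate j AB.b := by
  simp [wrd, List.replicate_succ]

lemma mem_wrd_a {i j : ℕ} (h : 0 < i) : AB.a ∈ wrd i j := by
  simp [wrd, List.mem_replicate]
  omega

lemma mem_wrd_b {i j : ℕ} (h : 0 < j) : AB.b ∈ wrd i j := by
  simp [wrd, List.mem_replicate]
  omega

lemma count_wrd_a (n m : ℕ) : (wrd n m).count AB.a = n := by
  simp [wrd, List.count_replicate]

lemma count_wrd_b (n m : ℕ) : (wrd n m).count AB.b = m := by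
  simp [wrd, List.count_replicate]

namespace RNFAwtl

variable {Q : Type}

lemma decomp_unique {α : Type} (S : Set α) :
    ∀ (u₁ : List α) {x₁ v₁ u₂ x₂ v₂}, u₁ ++ x₁ :: v₁ = u₂ ++ x₂ :: v₂ →
    (∀ y ∈ u₁, y ∈ S) → x₁ ∉ S → (∀ y ∈ u₂, y ∈ S) → x₂ ∉ S →
    u₁ = u₂ ∧ x₁ = x₂ ∧ v₁ = v₂ := by
  intro u₁
  induction u₁ with
  | nil =>
    intro x₁ v₁ u₂ x₂ v₂ he hu₁ hx₁ hu₂ hx₂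
    cases u₂ with
    | nil =>
      simp at he
      exact ⟨rfl, he.1, he.2⟩
    | cons y t =>
      simp at he
      exact absurd (he.1 ▸ hu₂ y (by simp)) hx₁
  | cons y t ih =>
    intro x₁ v₁ u₂ x₂ v₂ he hu₁ hx₁ hu₂ hx₂
    cases u₂ with
    | nil =>
      simp at he
      exact absurd (he.1 ▸ hu₁ y (by simp)) hx₂
    | cons z s =>
      simp at he
      obtain ⟨rfl, he2⟩ := he
      obtain ⟨h1, h2, h3⟩ := ih he2 (fun a ha => hu₁ a (by simp [ha])) hx₁
        (fun a ha => hu₂ a (by simp [ha])) hx₂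
      exact ⟨by rw [h1], h2, h3⟩

variable (A : RNFAwtl Q AB)

/-- a final (accepting, halting) configuration -/
def IsFinal (c : Q × List AB) : Prop := (∀ x ∈ c.2, x ∈ A.τ c.1) ∧ c.1 ∈ A.Facc

/-- reaching acceptance from a configuration -/
def AccC (c : Q × List AB) : Prop := ∃ d, Relation.ReflTransGen A.Step c d ∧ A.IsFinal d

lemma accepts_iff_accC (q0 : Q) (hI : A.I = {q0}) (w : List AB) :
    A.Accepts w ↔ A.AccC (q0, w) := by
  constructor
  · rintro ⟨q₁, hq₁, q, w', rtg, hall, hF⟩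
    rw [hI] at hq₁
    simp at hq₁
    subst hq₁
    exact ⟨(q, w'), rtg, hall, hF⟩
  · rintro ⟨⟨q, w'⟩, rtg, hall, hF⟩
    exact ⟨q0, by simp [hI], q, w', rtg, hall, hF⟩

lemma final_terminal {c d : Q × List AB} (hf : A.IsFinal c) : ¬ A.Step c d := by
  rintro (⟨u, x, v, he, hu, hx, _, _⟩ | ⟨hall, hq, _⟩)
  · exact hx (hf.1 x (by rw [he]; simp))
  · rw [A.accEnd c.1 hf.2] at hq
    exact hq

variable {A}

lemma step_det (hδ : ∀ q x, (A.δ q x).Subsingleton) (hδe : ∀ q, (A.δend q).Subsingleton)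
    {c d d' : Q × List AB} (h1 : A.Step c d) (h2 : A.Step c d') : d = d' := by
  rcases h1 with ⟨u, x, v, he, hu, hx, hq, hw⟩ | ⟨hall, hq, hw⟩
  · rcases h2 with ⟨u', x', v', he', hu', hx', hq', hw'⟩ | ⟨hall', _, _⟩
    · obtain ⟨rfl, rfl, rfl⟩ := decomp_unique (A.τ c.1) u (he ▸ he') hu hx hu' hx'
      have : d.1 = d'.1 := hδ c.1 x hq hq'
      exact Prod.ext this (by rw [hw, hw'])
    · exact absurd (hall' x (by rw [he]; simp)) hx
  · rcases h2 with ⟨u', x', v', he', hu', hx', hq', hw'⟩ | ⟨hall', hq', hw'⟩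
    · exact absurd (hall x' (by rw [he']; simp)) hx'
    · exact Prod.ext (hδe c.1 hq hq') (by rw [hw, hw'])

lemma rtg_to_terminal (hδ : ∀ q x, (A.δ q x).Subsingleton) (hδe : ∀ q, (A.δend q).Subsingleton)
    {c c' f : Q × List AB} (h : Relation.ReflTransGen A.Step c c')
    (hterm : ∀ d, ¬ A.Step f d) :
    Relation.ReflTransGen A.Step c f → Relation.ReflTransGen A.Step c' f := by
  induction h using Relation.ReflTransGen.head_induction_on with
  | refl => exact id
  | @head a b hab _ ih =>
    intro haf
    rcases Relation.ReflTransGen.cases_head haf with rfl | ⟨x, hax, hxf⟩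
    · exact absurd hab (hterm b)
    · exact ih (by rwa [← step_det hδ hδe hab hax] at hxf)

lemma accC_iff_of_rtg (hδ : ∀ q x, (A.δ q x).Subsingleton) (hδe : ∀ q, (A.δend q).Subsingleton)
    {c c' : Q × List AB} (h : Relation.ReflTransGen A.Step c c') :
    A.AccC c ↔ A.AccC c' := by
  constructor
  · rintro ⟨f, hcf, hfin⟩
    exact ⟨f, rtg_to_terminal hδ hδe h (fun d => A.final_terminal hfin) hcf, hfin⟩
  · rintro ⟨f, hcf, hfin⟩
    exact ⟨f, Relation.ReflTransGen.trans h hcf, hfin⟩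

lemma reach_on_seq (hδ : ∀ q x, (A.δ q x).Subsingleton) (hδe : ∀ q, (A.δend q).Subsingleton)
    {c d : Q × List AB} (h : Relation.ReflTransGen A.Step c d) :
    ∀ seq : ℕ → Q × List AB, seq 0 = c → (∀ t, A.Step (seq t) (seq (t + 1))) →
    ∃ k, d = seq k := by
  induction h using Relation.ReflTransGen.head_induction_on with
  | refl => exact fun seq h0 _ => ⟨0, h0.symm⟩
  | @head a b hab _ ih =>
    intro seq h0 hstep
    have h1 : seq 1 = b := step_det hδ hδe (h0 ▸ hstep 0) hab
    obtain ⟨k, hk⟩ := ih (fun t => seq (t + 1)) h1 (fun t => hstep (t + 1))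
    exact ⟨k + 1, hk⟩

/-- step constructors on words of shape a^i b^j -/
lemma stepA_wrd {q q' : Q} (ha : AB.a ∉ A.τ q) (hq' : q' ∈ A.δ q AB.a) (i j : ℕ) :
    A.Step (q, wrd (i + 1) j) (q', wrd i j) :=
  Or.inl ⟨[], AB.a, wrd i j, by simp [wrd_succ_a], by simp, ha, hq', by simp⟩

lemma stepB_wrd {q q' : Q} (ha : AB.a ∈ A.τ q) (hb : AB.b ∉ A.τ q)
    (hq' : q' ∈ A.δ q AB.b) (i j : ℕ) :
    A.Step (q, wrd i (j + 1)) (q', wrd i j) :=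
  Or.inl ⟨List.replicate i AB.a, AB.b, List.replicate j AB.b, by simp [wrd_succ_b],
    fun y hy => by rw [List.eq_of_mem_replicate hy]; exact ha, hb, hq', rfl⟩

lemma stepE_any {q q' : Q} (ha : AB.a ∈ A.τ q) (hb : AB.b ∈ A.τ q)
    (hq' : q' ∈ A.δend q) (w : List AB) :
    A.Step (q, w) (q', w) :=
  Or.inr ⟨fun x _ => by rcases AB.cases_all x with rfl | rfl; exacts [ha, hb], hq', rfl⟩

end RNFAwtl
namespace RNFAwtl

variable {Q : Type}

inductive ROut (Q : Type) : Type
  | acc : ROut Q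
  | rej : ROut Q
  | stepA : Q → ROut Q
  | stepB : Q → ROut Q
  | stepE : Q → ROut Q

open Classical in
/-- abstract one-step behaviour of a deterministic RNFAwtl on a word a^i b^j with i,j ≥ 1 -/
noncomputable def bigF (A : RNFAwtl Q AB) (q : Q) : ROut Q :=
  if AB.a ∈ A.τ q then
    if AB.b ∈ A.τ q then
      if q ∈ A.Facc then ROut.acc
      else if h : (A.δend q).Nonempty then ROut.stepE h.choose else ROut.rej
    else if h : (A.δ q AB.b).Nonempty then ROut.stepB h.choose else ROut.rej
  else if h : (A.δ q AB.a).Nonempty then ROut.stepA h.choose else ROut.rej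

variable {A : RNFAwtl Q AB}

lemma bigF_stepA {q q' : Q} (h : bigF A q = ROut.stepA q') :
    AB.a ∉ A.τ q ∧ q' ∈ A.δ q AB.a := by
  by_cases h1 : AB.a ∈ A.τ q
  · by_cases h2 : AB.b ∈ A.τ q
    · by_cases h3 : q ∈ A.Facc
      · simp [bigF, h1, h2, h3] at h
      · by_cases h4 : (A.δend q).Nonempty <;> simp [bigF, h1, h2, h3, h4] at h
    · by_cases h5 : (A.δ q AB.b).Nonempty <;> simp [bigF, h1, h2, h5] at h
  · by_cases h6 : (A.δ q AB.a).Nonempty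
    · simp [bigF, h1, h6] at h
      exact ⟨h1, h ▸ h6.choose_spec⟩
    · simp [bigF, h1, h6] at h

lemma bigF_stepB {q q' : Q} (h : bigF A q = ROut.stepB q') :
    AB.a ∈ A.τ q ∧ AB.b ∉ A.τ q ∧ q' ∈ A.δ q AB.b := by
  by_cases h1 : AB.a ∈ A.τ q
  · by_cases h2 : AB.b ∈ A.τ q
    · by_cases h3 : q ∈ A.Facc
      · simp [bigF, h1, h2, h3] at h
      · by_cases h4 : (A.δend q).Nonempty <;> simp [bigF, h1, h2, h3, h4] at h
    · by_cases h5 : (A.δ q AB.b).Nonempty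
      · simp [bigF, h1, h2, h5] at h
        exact ⟨h1, h2, h ▸ h5.choose_spec⟩
      · simp [bigF, h1, h2, h5] at h
  · by_cases h6 : (A.δ q AB.a).Nonempty <;> simp [bigF, h1, h6] at h

lemma bigF_stepE {q q' : Q} (h : bigF A q = ROut.stepE q') :
    AB.a ∈ A.τ q ∧ AB.b ∈ A.τ q ∧ q ∉ A.Facc ∧ q' ∈ A.δend q := by
  by_cases h1 : AB.a ∈ A.τ q
  · by_cases h2 : AB.b ∈ A.τ q
    · by_cases h3 : q ∈ A.Facc
      · simp [bigF, h1, h2, h3] at h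
      · by_cases h4 : (A.δend q).Nonempty
        · simp [bigF, h1, h2, h3, h4] at h
          exact ⟨h1, h2, h3, h ▸ h4.choose_spec⟩
        · simp [bigF, h1, h2, h3, h4] at h
    · by_cases h5 : (A.δ q AB.b).Nonempty <;> simp [bigF, h1, h2, h5] at h
  · by_cases h6 : (A.δ q AB.a).Nonempty <;> simp [bigF, h1, h6] at h

lemma bigF_acc {q : Q} (h : bigF A q = ROut.acc) :
    AB.a ∈ A.τ q ∧ AB.b ∈ A.τ q ∧ q ∈ A.Facc := by
  by_cases h1 : AB.a ∈ A.τ q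
  · by_cases h2 : AB.b ∈ A.τ q
    · by_cases h3 : q ∈ A.Facc
      · exact ⟨h1, h2, h3⟩
      · by_cases h4 : (A.δend q).Nonempty <;> simp [bigF, h1, h2, h3, h4] at h
    · by_cases h5 : (A.δ q AB.b).Nonempty <;> simp [bigF, h1, h2, h5] at h
  · by_cases h6 : (A.δ q AB.a).Nonempty <;> simp [bigF, h1, h6] at h

lemma bigF_rej {q : Q} (h : bigF A q = ROut.rej) :
    (AB.a ∉ A.τ q ∧ A.δ q AB.a = ∅) ∨
    (AB.a ∈ A.τ q ∧ AB.b ∉ A.τ q ∧ A.δ q AB.b = ∅) ∨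
    (AB.a ∈ A.τ q ∧ AB.b ∈ A.τ q ∧ q ∉ A.Facc ∧ A.δend q = ∅) := by
  by_cases h1 : AB.a ∈ A.τ q
  · by_cases h2 : AB.b ∈ A.τ q
    · by_cases h3 : q ∈ A.Facc
      · simp [bigF, h1, h2, h3] at h
      · by_cases h4 : (A.δend q).Nonempty
        · simp [bigF, h1, h2, h3, h4] at h
        · exact Or.inr (Or.inr ⟨h1, h2, h3, Set.not_nonempty_iff_eq_empty.mp h4⟩)
    · by_cases h5 : (A.δ q AB.b).Nonempty
      · simp [bigF, h1, h2, h5] at h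
      · exact Or.inr (Or.inl ⟨h1, h2, Set.not_nonempty_iff_eq_empty.mp h5⟩)
  · by_cases h6 : (A.δ q AB.a).Nonempty
    · simp [bigF, h1, h6] at h
    · exact Or.inl ⟨h1, Set.not_nonempty_iff_eq_empty.mp h6⟩

/-- If bigF q = rej then a configuration (q, a^(i+1) b^(j+1)) is terminal and non-final. -/
lemma rej_terminal {q : Q} (h : bigF A q = ROut.rej) (i j : ℕ) :
    (∀ d, ¬ A.Step (q, wrd (i + 1) (j + 1)) d) ∧ ¬ A.IsFinal (q, wrd (i + 1) (j + 1)) := by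
  rcases bigF_rej h with ⟨ha, hδa⟩ | ⟨ha, hb, hδb⟩ | ⟨ha, hb, hFa, hδe⟩
  · constructor
    · rintro d (⟨u, x, v, he, hu, hx, hq, _⟩ | ⟨hall, hq, _⟩)
      · -- first letter is a
        rw [wrd_succ_a] at he
        cases u with
        | nil =>
          simp at he
          rw [← he.1, hδa] at hq
          exact hq
        | cons y t =>
          simp at he
          exact ha (he.1 ▸ hu y (by simp))
      · exact ha (hall AB.a (mem_wrd_a (by omega)))
    · rintro ⟨hall, _⟩
      exact ha (hall AB.a (mem_wrd_a (by omega)))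
  · constructor
    · rintro d (⟨u, x, v, he, hu, hx, hq, _⟩ | ⟨hall, hq, _⟩)
      · rcases AB.cases_all x with rfl | rfl
        · exact hx ha
        · rw [hδb] at hq; exact hq
      · exact hb (hall AB.b (mem_wrd_b (by omega)))
    · rintro ⟨hall, _⟩
      exact hb (hall AB.b (mem_wrd_b (by omega)))
  · constructor
    · rintro d (⟨u, x, v, he, hu, hx, hq, _⟩ | ⟨hall, hq, _⟩)
      · rcases AB.cases_all x with rfl | rfl
        · exact hx ha
        · exact hx hb
      · rw [hδe] at hq; exact hq
    · rintro ⟨_, hFa'⟩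
      exact hFa hFa'

noncomputable def trajF (A : RNFAwtl Q AB) (q0 : Q) : ℕ → Option (Q × ℕ × ℕ)
  | 0 => some (q0, 0, 0)
  | t + 1 => (trajF A q0 t).bind fun c =>
      match bigF A c.1 with
      | ROut.stepA q' => some (q', c.2.1 + 1, c.2.2)
      | ROut.stepB q' => some (q', c.2.1, c.2.2 + 1)
      | ROut.stepE q' => some (q', c.2.1, c.2.2)
      | _ => none

lemma trajF_succ_elim {A : RNFAwtl Q AB} {q0 : Q} {t : ℕ} {c' : Q × ℕ × ℕ}
    (h : trajF A q0 (t + 1) = some c') :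
    ∃ c, trajF A q0 t = some c ∧
      ((∃ q', bigF A c.1 = ROut.stepA q' ∧ c' = (q', c.2.1 + 1, c.2.2)) ∨
       (∃ q', bigF A c.1 = ROut.stepB q' ∧ c' = (q', c.2.1, c.2.2 + 1)) ∨
       (∃ q', bigF A c.1 = ROut.stepE q' ∧ c' = (q', c.2.1, c.2.2))) := by
  rw [trajF] at h
  cases htr : trajF A q0 t with
  | none => rw [htr] at h; simp at h
  | some c =>
    rw [htr] at h
    simp at h
    refine ⟨c, rfl, ?_⟩
    cases hbig : bigF A c.1 <;> rw [hbig] at h <;> simp at h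
    · exact Or.inl ⟨_, rfl, h.symm⟩
    · exact Or.inr (Or.inl ⟨_, rfl, h.symm⟩)
    · exact Or.inr (Or.inr ⟨_, rfl, h.symm⟩)
variable {q0 : Q}

lemma trajF_succ_bounds {t : ℕ} {c c' : Q × ℕ × ℕ}
    (h : trajF A q0 t = some c) (h' : trajF A q0 (t + 1) = some c') :
    c.2.1 ≤ c'.2.1 ∧ c'.2.1 ≤ c.2.1 + 1 ∧ c.2.2 ≤ c'.2.2 ∧ c'.2.2 ≤ c.2.2 + 1 := by
  obtain ⟨d, hd, hcase⟩ := trajF_succ_elim h'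
  rw [h] at hd
  have hdc : d = c := by injection hd.symm
  subst hdc
  rcases hcase with ⟨q', _, rfl⟩ | ⟨q', _, rfl⟩ | ⟨q', _, rfl⟩ <;> simp <;> omega

lemma trajF_prefix {t : ℕ} : ∀ t', t ≤ t' → ∀ c' : Q × ℕ × ℕ, trajF A q0 t' = some c' →
    ∃ c, trajF A q0 t = some c ∧ c.2.1 ≤ c'.2.1 ∧ c.2.2 ≤ c'.2.2 := by
  intro t'
  induction t' with
  | zero =>
    intro h c' hc'
    have : t = 0 := Nat.le_zero.mp h
    subst this
    exact ⟨c', hc', le_rfl, le_rfl⟩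
  | succ s ih =>
    intro h c' hc'
    rcases Nat.lt_or_ge t (s + 1) with hlt | hge
    · obtain ⟨d, hd, _⟩ := trajF_succ_elim hc'
      have hb := trajF_succ_bounds hd hc'
      obtain ⟨c, hc, h1, h2⟩ := ih (Nat.lt_succ_iff.mp hlt) d hd
      exact ⟨c, hc, le_trans h1 hb.1, le_trans h2 hb.2.2.1⟩
    · have : t = s + 1 := le_antisymm h hge
      subst this
      exact ⟨c', hc', le_rfl, le_rfl⟩

lemma trajF_zero : trajF A q0 0 = some (q0, 0, 0) := rfl

lemma trajF_reach : ∀ (t : ℕ) {q : Q} {α β : ℕ}, trajF A q0 t = some (q, α, β) →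
    ∀ n m, α ≤ n → β ≤ m →
    Relation.ReflTransGen A.Step (q0, wrd n m) (q, wrd (n - α) (m - β)) := by
  intro t
  induction t with
  | zero =>
    intro q α β h n m _ _
    rw [trajF_zero] at h
    have h2 := Option.some.inj h
    simp only [Prod.mk.injEq] at h2
    obtain ⟨rfl, rfl, rfl⟩ := h2
    simpa using Relation.ReflTransGen.refl
  | succ s ih =>
    intro q α β h n m hn hm
    obtain ⟨c, hc, hcase⟩ := trajF_succ_elim h
    obtain ⟨q₁, α₁, β₁⟩ := c
    rcases hcase with ⟨q', hbig, he⟩ | ⟨q', hbig, he⟩ | ⟨q', hbig, he⟩ <;>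
        simp only [Prod.mk.injEq] at hbig he ⊢
    · obtain ⟨rfl, rfl, rfl⟩ := he
      have hreach := ih hc n m (by omega) hm
      obtain ⟨ha, hq'⟩ := bigF_stepA hbig
      have harith : n - α₁ = (n - (α₁ + 1)) + 1 := by omega
      rw [harith] at hreach
      exact Relation.ReflTransGen.tail hreach (stepA_wrd ha hq' _ _)
    · obtain ⟨rfl, rfl, rfl⟩ := he
      have hreach := ih hc n m hn (by omega)
      obtain ⟨ha, hb, hq'⟩ := bigF_stepB hbig
      have harith : m - β₁ = (m - (β₁ + 1)) + 1 := by omega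
      rw [harith] at hreach
      exact Relation.ReflTransGen.tail hreach (stepB_wrd ha hb hq' _ _)
    · obtain ⟨rfl, rfl, rfl⟩ := he
      have hreach := ih hc n m hn hm
      obtain ⟨ha, hb, _, hq'⟩ := bigF_stepE hbig
      exact Relation.ReflTransGen.tail hreach (stepE_any ha hb hq' _)

lemma trajF_step_congr {t t' : ℕ} (h : trajF A q0 t = trajF A q0 t') :
    trajF A q0 (t + 1) = trajF A q0 (t' + 1) := by
  rw [trajF, trajF, h]
lemma stepA_cons {q q' : Q} (ha : AB.a ∉ A.τ q) (hq' : q' ∈ A.δ q AB.a) (w : List AB) :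
    A.Step (q, AB.a :: w) (q', w) :=
  Or.inl ⟨[], AB.a, w, rfl, by simp, ha, hq', rfl⟩

lemma stepB_cons {q q' : Q} (hb : AB.b ∉ A.τ q) (hq' : q' ∈ A.δ q AB.b) (w : List AB) :
    A.Step (q, AB.b :: w) (q', w) :=
  Or.inl ⟨[], AB.b, w, rfl, by simp, hb, hq', rfl⟩

lemma stepB_mid {q q' : Q} (ha : AB.a ∈ A.τ q) (hb : AB.b ∉ A.τ q)
    (hq' : q' ∈ A.δ q AB.b) (i : ℕ) (z : List AB) :
    A.Step (q, List.replicate i AB.a ++ (AB.b :: z)) (q', List.replicate i AB.a ++ z) :=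
  Or.inl ⟨List.replicate i AB.a, AB.b, z, rfl,
    fun y hy => by rw [List.eq_of_mem_replicate hy]; exact ha, hb, hq', rfl⟩

theorem master {Q : Type} [Fintype Q] (A : RNFAwtl Q AB) (q0 : Q)
    (hδ : ∀ q x, (A.δ q x).Subsingleton) (hδe : ∀ q, (A.δend q).Subsingleton) :
    (∃ a b, ∀ n m, a ≤ n → b ≤ m → A.AccC (q0, wrd n m)) ∨
    (∃ a b, ∀ n m, a < n → b < m → ¬ A.AccC (q0, wrd n m)) ∨
    (∃ p r N, ¬(p = 0 ∧ r = 0) ∧ 1 ≤ N ∧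
      (∀ n m, N ≤ n → N ≤ m → (A.AccC (q0, wrd n m) ↔ A.AccC (q0, wrd (n + p) (m + r)))) ∧
      (0 < r → ∃ x y : ℕ, ∀ n, x < n → y < n →
        (A.AccC (q0, wrd n n) ↔
          A.AccC (q0, List.replicate x AB.a ++
            (List.replicate (y + 1) AB.b ++ wrd (n - x) (n - y - 1)))))) := by
  classical
  by_cases hP : ∀ t : ℕ, ∃ c, trajF A q0 t = some c
  case neg =>
    -- the abstract run halts: find the first time it halts
    have hex : ∃ t, trajF A q0 t = none := by
      push_neg at hP
      obtain ⟨t, ht⟩ := hP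
      exact ⟨t, Option.eq_none_iff_forall_not_mem.mpr
        (fun c hc => ht c (Option.mem_def.mp hc))⟩
    have h0 : Nat.find hex ≠ 0 := by
      intro h
      have := Nat.find_spec hex
      rw [h, trajF_zero] at this
      cases this
    obtain ⟨s, hs⟩ : ∃ s, Nat.find hex = s + 1 := ⟨Nat.find hex - 1, by omega⟩
    have hsome : trajF A q0 s ≠ none := Nat.find_min hex (by omega)
    obtain ⟨c, hc⟩ := Option.ne_none_iff_exists'.mp hsome
    have hnone : trajF A q0 (s + 1) = none := hs ▸ Nat.find_spec hex
    -- determine bigF c.1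
    have hbigar : bigF A c.1 = ROut.acc ∨ bigF A c.1 = ROut.rej := by
      rw [trajF, hc, Option.bind_some] at hnone
      cases hbig : bigF A c.1 <;> rw [hbig] at hnone <;> simp at hnone
      · exact Or.inl rfl
      · exact Or.inr rfl
    obtain ⟨q₁, α₁, β₁⟩ := c
    rcases hbigar with hbig | hbig
    · -- accepting scenario
      left
      refine ⟨α₁, β₁, ?_⟩
      intro n m hn hm
      obtain ⟨ha, hb, hF⟩ := bigF_acc hbig
      have hreach := trajF_reach s hc n m hn hm
      refine ⟨(q₁, wrd (n - α₁) (m - β₁)), hreach, ?_, hF⟩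
      intro x _
      rcases AB.cases_all x with rfl | rfl
      exacts [ha, hb]
    · -- rejecting scenario
      right; left
      refine ⟨α₁, β₁, ?_⟩
      intro n m hn hm hacc
      have hreach := trajF_reach s hc n m (by omega) (by omega)
      have harn : n - α₁ = (n - α₁ - 1) + 1 := by omega
      have harm : m - β₁ = (m - β₁ - 1) + 1 := by omega
      rw [harn, harm] at hreach
      obtain ⟨hterm, hnfin⟩ := rej_terminal hbig (n - α₁ - 1) (m - β₁ - 1)
      have hacc' := (accC_iff_of_rtg hδ hδe hreach).mp hacc
      obtain ⟨d, hrtg, hfin⟩ := hacc'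
      rcases Relation.ReflTransGen.cases_head hrtg with rfl | ⟨e, he, _⟩
      · exact hnfin hfin
      · exact hterm e he
  case pos =>
    choose f hf using hP
    have hf0 : f 0 = (q0, 0, 0) := by
      have h := hf 0
      rw [trajF_zero] at h
      exact (Option.some.inj h).symm
    have hfmono : ∀ {t t' : ℕ}, t ≤ t' →
        (f t).2.1 ≤ (f t').2.1 ∧ (f t).2.2 ≤ (f t').2.2 := by
      intro t t' h
      obtain ⟨c, hc, h1, h2⟩ := trajF_prefix t' h _ (hf t')
      rw [hf t] at hc
      have : f t = c := Option.some.inj hc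
      rw [this]
      exact ⟨h1, h2⟩
    -- pigeonhole: two times with the same state
    obtain ⟨t0, t1, hlt, hq01⟩ : ∃ t0 t1 : ℕ, t0 < t1 ∧ (f t0).1 = (f t1).1 := by
      obtain ⟨i, j, hij, hqeq⟩ :=
        Fintype.exists_ne_map_eq_of_card_lt
          (fun i : Fin (Fintype.card Q + 1) => (f i).1) (by simp)
      rcases lt_or_gt_of_ne hij with h | h
      · exact ⟨i, j, h, hqeq⟩
      · exact ⟨j, i, h, hqeq.symm⟩
    have hm01 := hfmono (le_of_lt hlt) (t := t0) (t' := t1)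
    set p := (f t1).2.1 - (f t0).2.1 with hp
    set r := (f t1).2.2 - (f t0).2.2 with hr
    by_cases hpr : p = 0 ∧ r = 0
    · -- looping scenario: reject all large inputs
      right; left
      refine ⟨(f t1).2.1, (f t1).2.2, ?_⟩
      intro n m hn hm hacc
      have hft : f t1 = f t0 := by
        have h1 : (f t1).2.1 = (f t0).2.1 := by omega
        have h2 : (f t1).2.2 = (f t0).2.2 := by omega
        exact Prod.ext hq01.symm (Prod.ext h1 h2)
      have htraj : trajF A q0 t1 = trajF A q0 t0 := by rw [hf t0, hf t1, hft]
      have hcyc : ∀ t, t0 ≤ t → ∃ s, t0 ≤ s ∧ s ≤ t1 ∧ trajF A q0 t = trajF A q0 s := by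
        intro t ht
        induction t with
        | zero =>
          have h0 : t0 = 0 := Nat.le_zero.mp ht
          exact ⟨t0, le_rfl, le_of_lt hlt, by rw [h0]⟩
        | succ t ih =>
          rcases Nat.lt_or_ge t0 (t + 1) with hlt2 | hge
          · have ht' : t0 ≤ t := by omega
            obtain ⟨s, hs0, hs1, he⟩ := ih ht'
            rcases eq_or_lt_of_le hs1 with rfl | hslt
            · exact ⟨t0 + 1, by omega, by omega, trajF_step_congr (he.trans htraj)⟩
            · exact ⟨s + 1, by omega, by omega, trajF_step_congr he⟩
          · have : t0 = t + 1 := by omega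
            exact ⟨t0, le_rfl, le_of_lt hlt, by rw [this]⟩
      have hbound : ∀ t, (f t).2.1 ≤ (f t1).2.1 ∧ (f t).2.2 ≤ (f t1).2.2 := by
        intro t
        rcases le_or_gt t t1 with h | h
        · exact hfmono h
        · obtain ⟨s, hs0, hs1, he⟩ := hcyc t (by omega)
          have hfe : f t = f s := by
            have h2 := he
            rw [hf t, hf s] at h2
            exact Option.some.inj h2
          rw [hfe]
          exact hfmono hs1
      -- the infinite real run
      set seq : ℕ → Q × List AB :=
        fun t => ((f t).1, wrd (n - (f t).2.1) (m - (f t).2.2)) with hseq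
      have hseq0 : seq 0 = (q0, wrd n m) := by simp [hseq, hf0]
      have hstep : ∀ t, A.Step (seq t) (seq (t + 1)) := by
        intro t
        obtain ⟨c, hc, hcase⟩ := trajF_succ_elim (hf (t + 1))
        rw [hf t] at hc
        have hcf : f t = c := Option.some.inj hc
        rw [← hcf] at hcase
        rcases hcase with ⟨q', hbig, he⟩ | ⟨q', hbig, he⟩ | ⟨q', hbig, he⟩
        · obtain ⟨ha, hq'⟩ := bigF_stepA hbig
          have hbnd := (hbound (t + 1)).1
          rw [he] at hbnd
          simp only [hseq, he]
          have harith : n - (f t).2.1 = (n - ((f t).2.1 + 1)) + 1 := by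
            simp at hbnd; omega
          rw [harith]
          exact stepA_wrd ha hq' _ _
        · obtain ⟨ha, hb, hq'⟩ := bigF_stepB hbig
          have hbnd := (hbound (t + 1)).2
          rw [he] at hbnd
          simp only [hseq, he]
          have harith : m - (f t).2.2 = (m - ((f t).2.2 + 1)) + 1 := by
            simp at hbnd; omega
          rw [harith]
          exact stepB_wrd ha hb hq' _ _
        · obtain ⟨ha, hb, _, hq'⟩ := bigF_stepE hbig
          simp only [hseq, he]
          exact stepE_any ha hb hq' _
      obtain ⟨fc, hrtg, hfin⟩ := hacc
      obtain ⟨k, hk⟩ := reach_on_seq hδ hδe hrtg seq hseq0 hstep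
      subst hk
      -- contradiction: seq k cannot be final
      obtain ⟨c, hc, hcase⟩ := trajF_succ_elim (hf (k + 1))
      rw [hf k] at hc
      have hcf : f k = c := Option.some.inj hc
      rw [← hcf] at hcase
      obtain ⟨hall, hFa⟩ := hfin
      simp only [hseq] at hall hFa
      rcases hcase with ⟨q', hbig, _⟩ | ⟨q', hbig, _⟩ | ⟨q', hbig, _⟩
      · obtain ⟨ha, _⟩ := bigF_stepA hbig
        have hka := (hbound k).1
        exact ha (hall AB.a (mem_wrd_a (by omega)))
      · obtain ⟨_, hb, _⟩ := bigF_stepB hbig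
        have hkb := (hbound k).2
        exact hb (hall AB.b (mem_wrd_b (by omega)))
      · obtain ⟨_, _, hnF, _⟩ := bigF_stepE hbig
        exact hnF hFa
    · -- progressing scenario
      right; right
      refine ⟨p, r, max (f t1).2.1 (f t1).2.2 + 1, hpr, by omega, ?_, ?_⟩
      · -- the pumping equivalence
        intro n m hn hm
        have hreach0 : Relation.ReflTransGen A.Step (q0, wrd n m)
            ((f t0).1, wrd (n - (f t0).2.1) (m - (f t0).2.2)) :=
          trajF_reach t0 (q := (f t0).1) (α := (f t0).2.1) (β := (f t0).2.2)
            (by rw [hf t0]) n m (by omega) (by omega)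
        have hreach1 : Relation.ReflTransGen A.Step (q0, wrd (n + p) (m + r))
            ((f t1).1, wrd (n + p - (f t1).2.1) (m + r - (f t1).2.2)) :=
          trajF_reach t1 (q := (f t1).1) (α := (f t1).2.1) (β := (f t1).2.2)
            (by rw [hf t1]) (n + p) (m + r) (by omega) (by omega)
        have he2 : n + p - (f t1).2.1 = n - (f t0).2.1 := by omega
        have he3 : m + r - (f t1).2.2 = m - (f t0).2.2 := by omega
        rw [accC_iff_of_rtg hδ hδe hreach0, accC_iff_of_rtg hδ hδe hreach1,
          he2, he3, hq01]
      · -- the swap property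
        intro hrpos
        have hfind : ∃ s, t0 ≤ s ∧ s < t1 ∧ ∃ q', bigF A (f s).1 = ROut.stepB q' := by
          by_contra hno
          push_neg at hno
          have hconst : ∀ k, k ≤ t1 - t0 → (f (t0 + k)).2.2 = (f t0).2.2 := by
            intro k
            induction k with
            | zero => intro _; simp
            | succ k ih =>
              intro hk
              have hik := ih (by omega)
              obtain ⟨c, hc, hcase⟩ := trajF_succ_elim (hf (t0 + k + 1))
              rw [hf (t0 + k)] at hc
              have hcf : f (t0 + k) = c := Option.some.inj hc
              rw [← hcf] at hcase
              have hsucc : t0 + (k + 1) = (t0 + k) + 1 := by omega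
              rcases hcase with ⟨q', hbig, he⟩ | ⟨q', hbig, he⟩ | ⟨q', hbig, he⟩
              · rw [hsucc, he]
                simpa using hik
              · exact absurd hbig (by
                  have := hno (t0 + k) (by omega) (by omega)
                  exact this q')
              · rw [hsucc, he]
                simpa using hik
          have hfinal := hconst (t1 - t0) le_rfl
          rw [Nat.add_sub_cancel' (le_of_lt hlt)] at hfinal
          omega
        obtain ⟨s, hs0, hs1, q'', hbigB⟩ := hfind
        refine ⟨(f s).2.1, (f s).2.2, ?_⟩
        intro n hxn hyn
        have hms := hfmono (le_of_lt hs1) (t := s) (t' := t1)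
        -- the step at time s
        have he : f (s + 1) = (q'', (f s).2.1, (f s).2.2 + 1) := by
          obtain ⟨c, hc, hcase⟩ := trajF_succ_elim (hf (s + 1))
          rw [hf s] at hc
          have hcf : f s = c := Option.some.inj hc
          rw [← hcf] at hcase
          rcases hcase with ⟨q', hbig, he⟩ | ⟨q', hbig, he⟩ | ⟨q', hbig, he⟩ <;>
            rw [hbigB] at hbig
          · cases hbig
          · injection hbig with h
            rw [he, h]
          · cases hbig
        obtain ⟨ha, hb, hq'⟩ := bigF_stepB hbigB
        -- original run reaches the common configuration
        have hreach1 : Relation.ReflTransGen A.Step (q0, wrd n n)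
            (q'', wrd (n - (f s).2.1) (n - ((f s).2.2 + 1))) := by
          have := trajF_reach (s + 1) (q := q'') (α := (f s).2.1) (β := (f s).2.2 + 1)
            (by rw [hf (s + 1), he]) n n (by omega) (by omega)
          exact this
        -- the swapped word run
        have hW : ∀ t, t ≤ s → Relation.ReflTransGen A.Step
            (q0, List.replicate (f s).2.1 AB.a ++
              (List.replicate ((f s).2.2 + 1) AB.b ++ wrd (n - (f s).2.1) (n - (f s).2.2 - 1)))
            ((f t).1, List.replicate ((f s).2.1 - (f t).2.1) AB.a ++
              (List.replicate ((f s).2.2 + 1 - (f t).2.2) AB.b ++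
                wrd (n - (f s).2.1) (n - (f s).2.2 - 1))) := by
          intro t
          induction t with
          | zero =>
            intro _
            rw [hf0]
            simp only
            have h00 : (f s).2.1 - 0 = (f s).2.1 := by omega
            have h01 : (f s).2.2 + 1 - 0 = (f s).2.2 + 1 := by omega
            rw [h00, h01]
          | succ t iht =>
            intro hts
            have hmt := hfmono (le_of_lt (Nat.lt_of_succ_le hts)) (t := t) (t' := s)
            have hmt1 := hfmono hts (t := t + 1) (t' := s)
            have hprev := iht (by omega)
            obtain ⟨c2, hc2, hcase2⟩ := trajF_succ_elim (hf (t + 1))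
            rw [hf t] at hc2
            have hcf2 : f t = c2 := Option.some.inj hc2
            rw [← hcf2] at hcase2
            rcases hcase2 with ⟨q₂, hbig2, he2⟩ | ⟨q₂, hbig2, he2⟩ | ⟨q₂, hbig2, he2⟩
            · obtain ⟨ha2, hq2⟩ := bigF_stepA hbig2
              refine Relation.ReflTransGen.tail hprev ?_
              rw [he2]
              have h1 := hmt1.1
              rw [he2] at h1
              simp only at h1
              have harith : (f s).2.1 - (f t).2.1 = ((f s).2.1 - ((f t).2.1 + 1)) + 1 := by
                omega
              rw [harith, List.replicate_succ, List.cons_append]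
              exact stepA_cons ha2 hq2 _
            · obtain ⟨ha2, hb2, hq2⟩ := bigF_stepB hbig2
              refine Relation.ReflTransGen.tail hprev ?_
              rw [he2]
              have h1 := hmt1.2
              rw [he2] at h1
              simp only at h1
              have harith : (f s).2.2 + 1 - (f t).2.2 = ((f s).2.2 + 1 - ((f t).2.2 + 1)) + 1 := by
                omega
              rw [harith, List.replicate_succ, List.cons_append]
              exact stepB_mid ha2 hb2 hq2 _ _
            · obtain ⟨ha2, hb2, _, hq2⟩ := bigF_stepE hbig2
              refine Relation.ReflTransGen.tail hprev ?_
              rw [he2]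
              exact stepE_any ha2 hb2 hq2 _
        have hWs := hW s le_rfl
        -- final step on the swapped word
        have hlast : A.Step
            ((f s).1, List.replicate ((f s).2.1 - (f s).2.1) AB.a ++
              (List.replicate ((f s).2.2 + 1 - (f s).2.2) AB.b ++
                wrd (n - (f s).2.1) (n - (f s).2.2 - 1)))
            (q'', wrd (n - (f s).2.1) (n - (f s).2.2 - 1)) := by
          have e1 : (f s).2.1 - (f s).2.1 = 0 := by omega
          have e2 : (f s).2.2 + 1 - (f s).2.2 = 1 := by omega
          rw [e1, e2]
          simp only [List.replicate_zero, List.nil_append, List.replicate_one,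
            List.singleton_append]
          exact stepB_cons hb hq' _
        have hreach2 := Relation.ReflTransGen.tail hWs hlast
        have hfix : n - ((f s).2.2 + 1) = n - (f s).2.2 - 1 := by omega
        rw [accC_iff_of_rtg hδ hδe hreach1, accC_iff_of_rtg hδ hδe hreach2, hfix]
end RNFAwtl

lemma wrd_mem_Lor (n m : ℕ) : wrd n m ∈ Lor ↔ (n = m ∨ 2 * n = m) := by
  have h1 : wrd n m ∈ Leq ↔ n = m := by
    show (wrd n m).count AB.a = (wrd n m).count AB.b ↔ n = m
    rw [count_wrd_a, count_wrd_b]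
  have h2 : wrd n m ∈ L2eq ↔ 2 * n = m := by
    show 2 * (wrd n m).count AB.a = (wrd n m).count AB.b ↔ 2 * n = m
    rw [count_wrd_a, count_wrd_b]
  show wrd n m ∈ Leq ∨ wrd n m ∈ L2eq ↔ _
  rw [h1, h2]

lemma wrd_mem_LeqAsbs (n m : ℕ) : wrd n m ∈ Leq ∩ asbs ↔ n = m := by
  constructor
  · rintro ⟨h1, -⟩
    have : (wrd n m).count AB.a = (wrd n m).count AB.b := h1
    rwa [count_wrd_a, count_wrd_b] at this
  · rintro rfl
    refine ⟨?_, n, n, rfl⟩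
    show (wrd n n).count AB.a = (wrd n n).count AB.b
    rw [count_wrd_a, count_wrd_b]

lemma sorted_no_ba {k l i j : ℕ}
    (hi : (List.replicate k AB.a ++ List.replicate l AB.b)[i]? = some AB.b)
    (hj : (List.replicate k AB.a ++ List.replicate l AB.b)[j]? = some AB.a)
    (hij : i < j) : False := by
  have hk : k ≤ i := by
    by_contra hik
    push_neg at hik
    rw [List.getElem?_append_left (by simpa using hik)] at hi
    rw [List.getElem?_replicate] at hi
    simp [hik] at hi
  have hkj : k ≤ j := by omega
  rw [List.getElem?_append_right (by simpa using hkj)] at hj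
  rw [List.getElem?_replicate] at hj
  by_cases hlt : j - (List.replicate k AB.a).length < l
  · simp [hlt] at hj
  · simp [hlt] at hj

theorem Lor_not_RDFA : Lor ∉ RDFAwtlLangs AB := by
  rintro ⟨Q, hQ, A, ⟨⟨q0, hI⟩, hδ, hδe⟩, hlang⟩
  have hacc : ∀ n m : ℕ, A.AccC (q0, wrd n m) ↔ (n = m ∨ 2 * n = m) := by
    intro n m
    rw [← RNFAwtl.accepts_iff_accC A q0 hI]
    have h1 : A.Accepts (wrd n m) ↔ wrd n m ∈ A.lang := Iff.rfl
    rw [h1, hlang, wrd_mem_Lor]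
  rcases RNFAwtl.master A q0 hδ hδe with ⟨a, b, h⟩ | ⟨a, b, h⟩ |
    ⟨p, r, N, hpr, hN, hequiv, -⟩
  · have h1 := (hacc (a + b + 2) (a + b + 3)).mp (h _ _ (by omega) (by omega))
    omega
  · exact h (a + b + 1) (a + b + 1) (by omega) (by omega)
      ((hacc _ _).mpr (Or.inl rfl))
  · have e1 : A.AccC (q0, wrd N N) := (hacc N N).mpr (Or.inl rfl)
    have e2 := (hequiv N N le_rfl le_rfl).mp e1
    have e3 := (hequiv (N + p) (N + r) (by omega) (by omega)).mp e2
    have e4 : A.AccC (q0, wrd N (2 * N)) := (hacc N (2 * N)).mpr (Or.inr rfl)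
    have e5 := (hequiv N (2 * N) le_rfl (by omega)).mp e4
    have c1 := (hacc (N + p) (N + r)).mp e2
    have c2 := (hacc (N + p + p) (N + r + r)).mp e3
    have c3 := (hacc (N + p) (2 * N + r)).mp e5
    omega

theorem LeqAsbs_not_RDFA : (Leq ∩ asbs) ∉ RDFAwtlLangs AB := by
  rintro ⟨Q, hQ, A, ⟨⟨q0, hI⟩, hδ, hδe⟩, hlang⟩
  have hacc : ∀ n m : ℕ, A.AccC (q0, wrd n m) ↔ n = m := by
    intro n m
    rw [← RNFAwtl.accepts_iff_accC A q0 hI]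
    have h1 : A.Accepts (wrd n m) ↔ wrd n m ∈ A.lang := Iff.rfl
    rw [h1, hlang, wrd_mem_LeqAsbs]
  rcases RNFAwtl.master A q0 hδ hδe with ⟨a, b, h⟩ | ⟨a, b, h⟩ |
    ⟨p, r, N, hpr, hN, hequiv, hswap⟩
  · have h1 := (hacc (a + b + 2) (a + b + 3)).mp (h _ _ (by omega) (by omega))
    omega
  · exact h (a + b + 1) (a + b + 1) (by omega) (by omega) ((hacc _ _).mpr rfl)
  · have e1 : A.AccC (q0, wrd N N) := (hacc N N).mpr rfl
    have e2 := (hequiv N N le_rfl le_rfl).mp e1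
    have hprr : p = r := by
      have := (hacc (N + p) (N + r)).mp e2
      omega
    have hr : 0 < r := by omega
    obtain ⟨x, y, hxy⟩ := hswap hr
    set n := max x y + 1 with hn
    have hx : x < n := by omega
    have hy : y < n := by omega
    have e3 : A.AccC (q0, wrd n n) := (hacc n n).mpr rfl
    have e4 := (hxy n hx hy).mp e3
    have hW : (List.replicate x AB.a ++
        (List.replicate (y + 1) AB.b ++ wrd (n - x) (n - y - 1))) ∈ Leq ∩ asbs := by
      rw [← hlang]
      exact (RNFAwtl.accepts_iff_accC A q0 hI _).mpr e4
    obtain ⟨-, k, l, hkl⟩ := hW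
    -- the word has a b at position x and an a at position x+y+1
    have hb' : (List.replicate x AB.a ++
        (List.replicate (y + 1) AB.b ++ wrd (n - x) (n - y - 1)))[x]? = some AB.b := by
      rw [List.getElem?_append_right (by simp : (List.replicate x AB.a).length ≤ x)]
      simp [List.replicate_succ]
    have ha' : (List.replicate x AB.a ++
        (List.replicate (y + 1) AB.b ++ wrd (n - x) (n - y - 1)))[x + y + 1]? = some AB.a := by
      rw [List.getElem?_append_right
        (by simp; omega : (List.replicate x AB.a).length ≤ x + y + 1)]
      have e : x + y + 1 - (List.replicate x AB.a).length = y + 1 := by rw [List.length_replicate]; omega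
      rw [e, List.getElem?_append_right
        (by simp : (List.replicate (y + 1) AB.b).length ≤ y + 1)]
      have e2 : y + 1 - (List.replicate (y + 1) AB.b).length = 0 := by simp
      rw [e2]
      have hnx : n - x = (n - x - 1) + 1 := by omega
      show (wrd (n - x) (n - y - 1))[0]? = some AB.a
      rw [hnx, wrd_succ_a]
      simp
    rw [hkl] at hb' ha'
    exact sorted_no_ba hb' ha' (by omega)
end Impossibility

/-- ℒ(RDFAwtl) is not closed under union, intersection with
regular sets, alphabetic morphisms, or commutative closure. -/
theorem RDFAwtl_nonclosure_union_inter_morphism_com :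
    Leq ∈ DFAwtlLangs AB ∧ L2eq ∈ DFAwtlLangs AB ∧
    Lor ∉ RDFAwtlLangs AB ∧
    (Leq ∩ asbs) ∉ RDFAwtlLangs AB ∧
    M ∈ DFAwtlLangs ABCD ∧
    (List.map φ) '' M = Lor ∧ (List.map φ) '' M ∉ RDFAwtlLangs AB ∧
    com R = Lor ∧ com R ∉ RDFAwtlLangs AB := by
  refine ⟨Leq_mem, L2eq_mem, Lor_not_RDFA, LeqAsbs_not_RDFA, M_mem, image_phi_M, ?_,
    com_R_eq, ?_⟩
  · rw [image_phi_M]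
    exact Lor_not_RDFA
  · rw [com_R_eq]
    exact Lor_not_RDFA
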